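/- arXiv:2407.16605 — 5 statements merged into one kernel-verified Lean document; each statement's English description precedes it below -/
import Mathlib

section
/- (Continuity of the Duhamel map.) Let T > 0, u₀ ∈ X_γ, and let u : (0,T] → X_α be strongly measurable with sup_{0<t≤T} t^{d_γ}‖u(t)‖_{X_α} < ∞. Then for every t ∈ (0,T] each function τ ↦ S_i(t−τ) P_i u(τ) is Bochner integrable on (0,t), and the function t ↦ S_{γα}(t)u₀ + Σ_{i=1}^n ∫_0^t S_i(t−τ) P_i u(τ) dτ is continuous from (0,T] to X_α. -/
open MeasureTheory Set Filter

set_option maxHeartbeats 1000000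


open MeasureTheory Set Filter

set_option maxHeartbeats 1000000

/-- measurability of `τ ↦ L (t-τ) (v τ)` for strongly continuous `L` and measurable `v`. -/
theorem aesm_shift_apply {E F : Type*} [NormedAddCommGroup E] [NormedSpace ℝ E]
    [NormedAddCommGroup F] [NormedSpace ℝ F]
    (L : ℝ → E →L[ℝ] F) (hL : ∀ y : E, ContinuousOn (fun r => L r y) (Ioi 0))
    (t : ℝ) (A : Set ℝ) (hA : MeasurableSet A) (hsub : ∀ τ ∈ A, 0 < t - τ)
    (v : ℝ → E) (hv : AEStronglyMeasurable v (volume.restrict A)) :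
    AEStronglyMeasurable (fun τ => L (t - τ) (v τ)) (volume.restrict A) := by
  obtain ⟨g, hg, hvg⟩ := hv
  have hsm : ∀ φ : SimpleFunc ℝ E,
      AEStronglyMeasurable (fun τ => L (t - τ) (φ τ)) (volume.restrict A) := by
    intro φ
    induction φ using MeasureTheory.SimpleFunc.induction with
    | @const c s hs =>
      have heq : (fun τ => L (t - τ) ((SimpleFunc.piecewise s hs (SimpleFunc.const ℝ c)
          (SimpleFunc.const ℝ 0)) τ)) = Set.indicator s (fun τ => L (t - τ) c) := by
        funext τ
        simp only [SimpleFunc.coe_piecewise, SimpleFunc.coe_const, Set.piecewise,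
          Set.indicator_apply]
        by_cases h : τ ∈ s <;> simp [h]
      rw [heq]
      have hcont : ContinuousOn (fun τ => L (t - τ) c) A := by
        exact (hL c).comp ((continuous_const.sub continuous_id).continuousOn)
          (fun τ hτ => hsub τ hτ)
      exact (hcont.aestronglyMeasurable hA).indicator hs
    | @add f g _ hf hg' =>
      have heq : (fun τ => L (t - τ) ((f + g) τ)) =
          fun τ => L (t - τ) (f τ) + L (t - τ) (g τ) := by
        funext τ; simp [map_add]
      rw [heq]; exact hf.add hg'
  have key : AEStronglyMeasurable (fun τ => L (t - τ) (g τ)) (volume.restrict A) := by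
    refine aestronglyMeasurable_of_tendsto_ae atTop (fun k => hsm (hg.approx k)) ?_
    filter_upwards with τ
    exact ((L (t - τ)).continuous.tendsto _).comp (hg.tendsto_approx τ)
  refine key.congr ?_
  filter_upwards [hvg] with τ h
  rw [h]

open MeasureTheory Set Filter

set_option maxHeartbeats 1000000

theorem beta_integrableOn {a b t : ℝ} (ha0 : 0 ≤ a) (ha : a < 1) (hb0 : 0 ≤ b) (hb : b < 1)
    (ht : 0 < t) :
    IntegrableOn (fun τ => (t - τ) ^ (-a) * τ ^ (-b)) (Ioo 0 t) := by
  have hmeas : Measurable fun τ : ℝ => (t - τ) ^ (-a) * τ ^ (-b) := by fun_prop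
  have h2 : (0:ℝ) < t / 2 := by linarith
  have hsplit : Ioo (0:ℝ) t = Ioc 0 (t/2) ∪ Ioo (t/2) t := by
    rw [← Ioc_union_Ioo_eq_Ioo (le_of_lt h2) (by linarith)]
  rw [hsplit]
  apply IntegrableOn.union
  · -- on (0, t/2]: bounded by (t/2)^(-a) * τ^(-b)
    have hint : IntegrableOn (fun τ : ℝ => (t/2) ^ (-a) * τ ^ (-b)) (Ioc 0 (t/2)) :=
      (intervalIntegral.intervalIntegrable_rpow' (by linarith)).1.const_mul _
    refine Integrable.mono' hint (hmeas.aestronglyMeasurable) ?_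
    filter_upwards [ae_restrict_mem measurableSet_Ioc] with τ hτ
    have hτ0 : 0 < τ := hτ.1
    have htτ : (0:ℝ) < t - τ := by have := hτ.2; linarith
    rw [Real.norm_eq_abs, abs_of_nonneg (mul_nonneg (Real.rpow_nonneg htτ.le _)
      (Real.rpow_nonneg hτ0.le _))]
    apply mul_le_mul_of_nonneg_right _ (Real.rpow_nonneg hτ0.le _)
    exact Real.rpow_le_rpow_of_nonpos h2 (by linarith [hτ.2]) (by linarith)
  · -- on (t/2, t): bounded by (t-τ)^(-a) * (t/2)^(-b)
    have hint0 : IntervalIntegrable (fun x : ℝ => x ^ (-a)) volume 0 (t/2) :=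
      intervalIntegral.intervalIntegrable_rpow' (by linarith)
    have hint1 : IntervalIntegrable (fun τ : ℝ => (t - τ) ^ (-a)) volume (t - 0) (t - t/2) :=
      hint0.comp_sub_left t
    rw [sub_zero, show t - t/2 = t/2 by ring] at hint1
    have hint2 : IntegrableOn (fun τ : ℝ => (t - τ) ^ (-a)) (Ioc (t/2) t) := hint1.2
    have hint : IntegrableOn (fun τ : ℝ => (t - τ) ^ (-a) * (t/2) ^ (-b)) (Ioo (t/2) t) :=
      ((hint2.mono_set Ioo_subset_Ioc_self).mul_const _)
    refine Integrable.mono' hint (hmeas.aestronglyMeasurable) ?_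
    filter_upwards [ae_restrict_mem measurableSet_Ioo] with τ hτ
    have hτ0 : (0:ℝ) < t/2 := h2
    have htτ : (0:ℝ) < t - τ := by have := hτ.2; linarith
    rw [Real.norm_eq_abs, abs_of_nonneg (mul_nonneg (Real.rpow_nonneg htτ.le _)
      (Real.rpow_nonneg (by linarith [hτ.1] : (0:ℝ) ≤ τ) _))]
    apply mul_le_mul_of_nonneg_left _ (Real.rpow_nonneg htτ.le _)
    exact Real.rpow_le_rpow_of_nonpos h2 (le_of_lt hτ.1) (by linarith)

theorem exists_small_rpow {p ε R : ℝ} (hp : 0 < p) (hε : 0 < ε) (hR : 0 < R) :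
    ∃ r : ℝ, 0 < r ∧ r < R ∧ r ^ p < ε := by
  have hc : ContinuousAt (fun x : ℝ => x ^ p) 0 :=
    Real.continuousAt_rpow_const 0 p (Or.inr hp.le)
  have h0 : (0:ℝ) ^ p = 0 := Real.zero_rpow (ne_of_gt hp)
  have ht : Filter.Tendsto (fun x : ℝ => x ^ p) (nhdsWithin 0 (Ioo 0 R)) (nhds 0) := by
    have := (hc.continuousWithinAt (s := Ioo 0 R)).tendsto
    rwa [h0] at this
  have hev : ∀ᶠ r in nhdsWithin 0 (Ioo 0 R), (r : ℝ) ^ p < ε := by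
    have := ht.eventually (eventually_lt_nhds hε)
    simpa [h0] using this
  have hne : (nhdsWithin (0:ℝ) (Ioo 0 R)).NeBot := by
    apply IsGLB.nhdsWithin_neBot (isGLB_Ioo hR)
    exact nonempty_Ioo.mpr hR
  obtain ⟨r, hr1, hr2⟩ := (hev.and (eventually_mem_nhdsWithin)).exists
  exact ⟨r, hr2.1, hr2.2, hr1⟩


/-- Continuity of the Duhamel map: if `u : (0,T] → X_α` is strongly measurable
with `sup_{0<t≤T} t^{d_γ}‖u(t)‖ < ∞`, then for every `t ∈ (0,T]` the integrand
`τ ↦ S_i(t-τ) P_i u(τ)` is Bochner integrable on `(0,t)` and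
`t ↦ S_{γα}(t)u₀ + Σ_i ∫_0^t S_i(t-τ) P_i u(τ) dτ` is continuous on `(0,T]`. -/
theorem duhamel_map_continuous
    {n : ℕ} (hn : 0 < n)
    {Xγ Xα : Type*}
    [NormedAddCommGroup Xγ] [NormedSpace ℝ Xγ] [CompleteSpace Xγ]
    [NormedAddCommGroup Xα] [NormedSpace ℝ Xα] [CompleteSpace Xα]
    {Xβ : Fin n → Type*} [∀ i, NormedAddCommGroup (Xβ i)]
    [∀ i, NormedSpace ℝ (Xβ i)] [∀ i, CompleteSpace (Xβ i)]
    (Sγα : ℝ → Xγ →L[ℝ] Xα)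
    (S : (i : Fin n) → ℝ → (Xβ i →L[ℝ] Xα))
    (hScont : ∀ x : Xγ, ContinuousOn (fun t => (Sγα t) x) (Ioi 0))
    (hSicont : ∀ i (y : Xβ i), ContinuousOn (fun t => (S i t) y) (Ioi 0))
    (dγ : ℝ) (hdγ0 : 0 ≤ dγ) (hdγ1 : dγ < 1)
    (d : Fin n → ℝ) (hd0 : ∀ i, 0 ≤ d i) (hd1 : ∀ i, d i < 1)
    (hbound : ∀ T > (0:ℝ), ∃ M : ℝ,
      (∀ t : ℝ, 0 < t → t ≤ T → ‖Sγα t‖ ≤ M * t ^ (-dγ)) ∧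
      (∀ i, ∀ t : ℝ, 0 < t → t ≤ T → ‖S i t‖ ≤ M * t ^ (-(d i))))
    (P : (i : Fin n) → Xα →L[ℝ] Xβ i)
    (T : ℝ) (hT : 0 < T) (u₀ : Xγ) (u : ℝ → Xα)
    (humeas : AEStronglyMeasurable u (volume.restrict (Ioi (0:ℝ))))
    (hubd : ∃ K : ℝ, ∀ t : ℝ, 0 < t → t ≤ T → t ^ dγ * ‖u t‖ ≤ K) :
    (∀ t : ℝ, 0 < t → t ≤ T → ∀ i,
        IntegrableOn (fun τ => (S i (t - τ)) ((P i) (u τ))) (Ioo 0 t)) ∧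
    ContinuousOn
      (fun t => (Sγα t) u₀ + ∑ i, ∫ τ in Ioo (0:ℝ) t, (S i (t - τ)) ((P i) (u τ)))
      (Ioc 0 T) := by
  obtain ⟨K₀, hK₀⟩ := hubd
  obtain ⟨M₀, hM₀γ, hM₀⟩ := hbound T hT
  set M : ℝ := max M₀ 0 with hM_def
  set K : ℝ := max K₀ 0 with hK_def
  have hM0 : (0:ℝ) ≤ M := le_max_right _ _
  have hK0 : (0:ℝ) ≤ K := le_max_right _ _
  have hM : ∀ i, ∀ t : ℝ, 0 < t → t ≤ T → ‖S i t‖ ≤ M * t ^ (-(d i)) := fun i t h1 h2 =>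
    (hM₀ i t h1 h2).trans (mul_le_mul_of_nonneg_right (le_max_left _ _)
      (Real.rpow_nonneg h1.le _))
  have hK : ∀ t : ℝ, 0 < t → t ≤ T → ‖u t‖ ≤ K * t ^ (-dγ) := by
    intro t h1 h2
    have h3 : t ^ dγ * ‖u t‖ ≤ K := (hK₀ t h1 h2).trans (le_max_left _ _)
    have h4 : (0:ℝ) < t ^ dγ := Real.rpow_pos_of_pos h1 _
    rw [Real.rpow_neg h1.le, ← div_eq_mul_inv, le_div_iff₀ h4]
    linarith [h3]
  -- pointwise norm bound
  have hnorm : ∀ i, ∀ s τ : ℝ, 0 < τ → τ < s → s ≤ T →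
      ‖S i (s - τ) (P i (u τ))‖ ≤ M * ‖P i‖ * K * ((s - τ) ^ (-(d i)) * τ ^ (-dγ)) := by
    intro i s τ hτ0 hτs hsT
    have h1 : (0:ℝ) < s - τ := by linarith
    have h2 : s - τ ≤ T := by linarith
    calc ‖S i (s - τ) (P i (u τ))‖ ≤ ‖S i (s - τ)‖ * ‖P i (u τ)‖ :=
          (S i (s - τ)).le_opNorm _
      _ ≤ ‖S i (s - τ)‖ * (‖P i‖ * ‖u τ‖) := by
          exact mul_le_mul_of_nonneg_left ((P i).le_opNorm _) (norm_nonneg _)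
      _ ≤ (M * (s - τ) ^ (-(d i))) * (‖P i‖ * (K * τ ^ (-dγ))) := by
          apply mul_le_mul (hM i _ h1 h2)
            (mul_le_mul_of_nonneg_left (hK τ hτ0 (by linarith)) (norm_nonneg _))
            (mul_nonneg (norm_nonneg _) (norm_nonneg _))
            (mul_nonneg hM0 (Real.rpow_nonneg h1.le _))
      _ = M * ‖P i‖ * K * ((s - τ) ^ (-(d i)) * τ ^ (-dγ)) := by ring
  -- Part 1: integrability
  have part1 : ∀ t : ℝ, 0 < t → t ≤ T → ∀ i,
      IntegrableOn (fun τ => (S i (t - τ)) ((P i) (u τ))) (Ioo 0 t) := by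
    intro t ht0 htT i
    have hmeas : AEStronglyMeasurable (fun τ => S i (t - τ) (P i (u τ)))
        (volume.restrict (Ioo 0 t)) := by
      apply aesm_shift_apply (S i) (hSicont i) t _ measurableSet_Ioo
        (fun τ hτ => by simp only [mem_Ioo] at hτ; linarith [hτ.2])
      have hu' : AEStronglyMeasurable u (volume.restrict (Ioo 0 t)) :=
        humeas.mono_measure (Measure.restrict_mono Ioo_subset_Ioi_self le_rfl)
      exact (P i).continuous.comp_aestronglyMeasurable hu'
    refine Integrable.mono'
      (g := fun τ => M * ‖P i‖ * K * ((t - τ) ^ (-(d i)) * τ ^ (-dγ))) ?_ hmeas ?_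
    · exact (beta_integrableOn (hd0 i) (hd1 i) hdγ0 hdγ1 ht0).const_mul _
    · filter_upwards [ae_restrict_mem measurableSet_Ioo] with τ hτ
      exact hnorm i t τ hτ.1 hτ.2 htT
  refine ⟨part1, ?_⟩
  have hcont1 : ContinuousOn (fun t => (Sγα t) u₀) (Ioc 0 T) :=
    (hScont u₀).mono Ioc_subset_Ioi_self
  refine hcont1.add ?_
  apply continuousOn_finset_sum
  intro i _
  intro t₀ ht₀
  obtain ⟨ht₀0, ht₀T⟩ := ht₀
  rw [Metric.continuousWithinAt_iff]
  intro ε hε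
  -- abstract constants
  obtain ⟨C, hC0, hCb⟩ : ∃ C : ℝ, 0 ≤ C ∧ ∀ s τ : ℝ, 0 < τ → τ < s → s ≤ T →
      ‖S i (s - τ) (P i (u τ))‖ ≤ C * ((s - τ) ^ (-(d i)) * τ ^ (-dγ)) :=
    ⟨M * ‖P i‖ * K, mul_nonneg (mul_nonneg hM0 (norm_nonneg _)) hK0, hnorm i⟩
  obtain ⟨Cγ, hCγ0, hCγb⟩ : ∃ Cγ : ℝ, 0 ≤ Cγ ∧ ∀ τ : ℝ, t₀ / 2 ≤ τ → τ ^ (-dγ) ≤ Cγ :=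
    ⟨(t₀ / 2) ^ (-dγ), Real.rpow_nonneg (by linarith) _,
      fun τ hτ => Real.rpow_le_rpow_of_nonpos (by linarith) hτ (by linarith)⟩
  have hp : (0:ℝ) < 1 - d i := by linarith [hd1 i]
  have hεp : (0:ℝ) < ε / 3 * (1 - d i) / (C * Cγ + 1) := by positivity
  obtain ⟨sδ, hsδ0, hsδR, hsδp⟩ := exists_small_rpow hp hεp
    (by linarith : (0:ℝ) < 3 * t₀ / 4)
  set r : ℝ := 2 * sδ / 3 with hr_def
  have hr0 : (0:ℝ) < r := by rw [hr_def]; linarith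
  have hrhalf : r < t₀ / 2 := by rw [hr_def]; linarith
  have hkey : ∀ x : ℝ, 0 ≤ x → x ≤ sδ →
      C * Cγ * (x ^ (1 - d i) / (1 - d i)) < ε / 3 := by
    intro x hx0 hx1
    have hxp : x ^ (1 - d i) < ε / 3 * (1 - d i) / (C * Cγ + 1) :=
      lt_of_le_of_lt (Real.rpow_le_rpow hx0 hx1 hp.le) hsδp
    have h1 : C * Cγ * (x ^ (1 - d i) / (1 - d i)) ≤
        (C * Cγ + 1) * (x ^ (1 - d i) / (1 - d i)) :=
      mul_le_mul_of_nonneg_right (by linarith)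
        (div_nonneg (Real.rpow_nonneg hx0 _) hp.le)
    have h2 : (C * Cγ + 1) * (x ^ (1 - d i) / (1 - d i)) <
        (C * Cγ + 1) * ((ε / 3 * (1 - d i) / (C * Cγ + 1)) / (1 - d i)) := by
      have hpos : (0:ℝ) < C * Cγ + 1 := by nlinarith
      exact mul_lt_mul_of_pos_left ((div_lt_div_iff_of_pos_right hp).mpr hxp) hpos
    have h3 : (C * Cγ + 1) * ((ε / 3 * (1 - d i) / (C * Cγ + 1)) / (1 - d i)) = ε / 3 := by
      have hpos : (0:ℝ) < C * Cγ + 1 := by nlinarith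
      field_simp
    linarith
  have hc0 : (0:ℝ) < t₀ - r := by linarith
  -- integrability over Ioc
  have hIntIoc : ∀ s : ℝ, 0 < s → s ≤ T →
      IntegrableOn (fun τ => S i (s - τ) (P i (u τ))) (Ioc 0 s) := by
    intro s h1 h2
    rw [integrableOn_Ioc_iff_integrableOn_Ioo]
    exact part1 s h1 h2 i
  -- splitting of the integral
  have hsplit : ∀ s : ℝ, t₀ - r < s → s ≤ T →
      (∫ τ in Ioo 0 s, S i (s - τ) (P i (u τ))) =
        (∫ τ in Ioc 0 (t₀ - r), S i (s - τ) (P i (u τ))) +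
        ∫ τ in Ioc (t₀ - r) s, S i (s - τ) (P i (u τ)) := by
    intro s h1 h2
    have h0s : (0:ℝ) < s := by linarith
    rw [← integral_Ioc_eq_integral_Ioo,
      ← Ioc_union_Ioc_eq_Ioc hc0.le h1.le,
      setIntegral_union (Ioc_disjoint_Ioc_of_le le_rfl) measurableSet_Ioc
        ((hIntIoc s h0s h2).mono_set (Ioc_subset_Ioc_right h1.le))
        ((hIntIoc s h0s h2).mono_set (Ioc_subset_Ioc_left hc0.le))]
  -- tail estimate
  have htail : ∀ s : ℝ, t₀ - r < s → s ≤ T →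
      ‖∫ τ in Ioc (t₀ - r) s, S i (s - τ) (P i (u τ))‖ ≤
        C * Cγ * ((s - (t₀ - r)) ^ (1 - d i) / (1 - d i)) := by
    intro s h1 h2
    have h0s : (0:ℝ) < s := by linarith
    have hJ : IntervalIntegrable (fun x : ℝ => x ^ (-(d i))) volume 0 (s - (t₀ - r)) :=
      intervalIntegral.intervalIntegrable_rpow' (by linarith [hd1 i])
    have hJ2 := hJ.comp_sub_left s
    rw [sub_zero, show s - (s - (t₀ - r)) = t₀ - r by ring] at hJ2
    have hJ3 : IntegrableOn (fun τ : ℝ => (s - τ) ^ (-(d i))) (Ioc (t₀ - r) s) := hJ2.2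
    have hval : (∫ τ in Ioc (t₀ - r) s, (s - τ) ^ (-(d i))) =
        (s - (t₀ - r)) ^ (1 - d i) / (1 - d i) := by
      rw [← intervalIntegral.integral_of_le h1.le,
        intervalIntegral.integral_comp_sub_left (fun x : ℝ => x ^ (-(d i))) s,
        show s - s = (0:ℝ) by ring,
        integral_rpow (Or.inl (by linarith [hd1 i] : (-1:ℝ) < -(d i))),
        Real.zero_rpow (by intro h; linarith [hd1 i] : -(d i) + 1 ≠ 0),
        show -(d i) + 1 = 1 - d i by ring]
      ring
    calc ‖∫ τ in Ioc (t₀ - r) s, S i (s - τ) (P i (u τ))‖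
        = ‖∫ τ in Ioo (t₀ - r) s, S i (s - τ) (P i (u τ))‖ := by
          rw [integral_Ioc_eq_integral_Ioo]
      _ ≤ ∫ τ in Ioo (t₀ - r) s, ‖S i (s - τ) (P i (u τ))‖ :=
          norm_integral_le_integral_norm _
      _ ≤ ∫ τ in Ioo (t₀ - r) s, C * Cγ * (s - τ) ^ (-(d i)) := by
          apply setIntegral_mono_on
          · exact ((part1 s h0s h2 i).mono_set (Ioo_subset_Ioo_left hc0.le)).norm
          · exact ((hJ3.mono_set Ioo_subset_Ioc_self).const_mul _)
          · exact measurableSet_Ioo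
          · intro τ hτ
            have hb := hCb s τ (by linarith [hτ.1] : (0:ℝ) < τ) hτ.2 h2
            have hτγ : τ ^ (-dγ) ≤ Cγ := hCγb τ (by linarith [hτ.1])
            calc ‖S i (s - τ) (P i (u τ))‖
                ≤ C * ((s - τ) ^ (-(d i)) * τ ^ (-dγ)) := hb
              _ ≤ C * ((s - τ) ^ (-(d i)) * Cγ) := by
                  apply mul_le_mul_of_nonneg_left _ hC0
                  exact mul_le_mul_of_nonneg_left hτγ
                    (Real.rpow_nonneg (by linarith [hτ.2]) _)
              _ = C * Cγ * (s - τ) ^ (-(d i)) := by ring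
      _ = C * Cγ * ∫ τ in Ioo (t₀ - r) s, (s - τ) ^ (-(d i)) := integral_const_mul _ _
      _ = C * Cγ * ((s - (t₀ - r)) ^ (1 - d i) / (1 - d i)) := by
          rw [← integral_Ioc_eq_integral_Ioo, hval]
  -- eventually facts
  have hball : ∀ᶠ s in nhdsWithin t₀ (Ioc 0 T), dist s t₀ < r / 2 := by
    apply Filter.Eventually.filter_mono nhdsWithin_le_nhds
    have hm := Metric.ball_mem_nhds t₀ (by linarith : (0:ℝ) < r / 2)
    exact Filter.eventually_of_mem hm (fun x hx => by simpa [Metric.mem_ball] using hx)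
  have hmem : ∀ᶠ s in nhdsWithin t₀ (Ioc 0 T), s ∈ Ioc 0 T := eventually_mem_nhdsWithin
  -- the A term tends to zero
  have hA : Tendsto (fun s => ∫ τ in Ioc 0 (t₀ - r),
      (S i (s - τ) (P i (u τ)) - S i (t₀ - τ) (P i (u τ))))
      (nhdsWithin t₀ (Ioc 0 T)) (nhds 0) := by
    have h := tendsto_integral_filter_of_dominated_convergence
      (F := fun (s : ℝ) (τ : ℝ) => S i (s - τ) (P i (u τ)) - S i (t₀ - τ) (P i (u τ)))
      (f := fun _ : ℝ => (0:Xα))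
      (bound := fun τ => 2 * C * (r / 2) ^ (-(d i)) * τ ^ (-dγ))
      (μ := volume.restrict (Ioc 0 (t₀ - r))) (l := nhdsWithin t₀ (Ioc 0 T)) ?_ ?_ ?_ ?_
    · simpa using h
    · filter_upwards [hball, hmem] with s hs hsmem
      have hd' := abs_lt.mp (by rwa [Real.dist_eq] at hs)
      have hs1 : t₀ - r < s := by linarith [hd'.1]
      have hsub : Ioc 0 (t₀ - r) ⊆ Ioo 0 s := fun τ hτ => ⟨hτ.1, by linarith [hτ.2]⟩
      have hsub' : Ioc 0 (t₀ - r) ⊆ Ioo 0 t₀ := fun τ hτ => ⟨hτ.1, by linarith [hτ.2]⟩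
      exact (((part1 s hsmem.1 hsmem.2 i).mono_set hsub).aestronglyMeasurable).sub
        (((part1 t₀ ht₀0 ht₀T i).mono_set hsub').aestronglyMeasurable)
    · filter_upwards [hball, hmem] with s hs hsmem
      filter_upwards [ae_restrict_mem measurableSet_Ioc] with τ hτ
      have hd' := abs_lt.mp (by rwa [Real.dist_eq] at hs)
      have hτ0 : (0:ℝ) < τ := hτ.1
      have hτc : τ ≤ t₀ - r := hτ.2
      have h1 : r / 2 ≤ s - τ := by linarith [hd'.1]
      have h2 : r / 2 ≤ t₀ - τ := by linarith
      have e1 : ‖S i (s - τ) (P i (u τ))‖ ≤ C * ((r / 2) ^ (-(d i)) * τ ^ (-dγ)) := by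
        refine (hCb s τ hτ0 (by linarith) hsmem.2).trans ?_
        apply mul_le_mul_of_nonneg_left _ hC0
        apply mul_le_mul_of_nonneg_right _ (Real.rpow_nonneg hτ0.le _)
        exact Real.rpow_le_rpow_of_nonpos (by linarith) h1 (by linarith [hd0 i])
      have e2 : ‖S i (t₀ - τ) (P i (u τ))‖ ≤ C * ((r / 2) ^ (-(d i)) * τ ^ (-dγ)) := by
        refine (hCb t₀ τ hτ0 (by linarith) ht₀T).trans ?_
        apply mul_le_mul_of_nonneg_left _ hC0
        apply mul_le_mul_of_nonneg_right _ (Real.rpow_nonneg hτ0.le _)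
        exact Real.rpow_le_rpow_of_nonpos (by linarith) h2 (by linarith [hd0 i])
      calc ‖S i (s - τ) (P i (u τ)) - S i (t₀ - τ) (P i (u τ))‖
          ≤ ‖S i (s - τ) (P i (u τ))‖ + ‖S i (t₀ - τ) (P i (u τ))‖ := norm_sub_le _ _
        _ ≤ 2 * C * (r / 2) ^ (-(d i)) * τ ^ (-dγ) := by
            have : C * ((r / 2) ^ (-(d i)) * τ ^ (-dγ)) +
                C * ((r / 2) ^ (-(d i)) * τ ^ (-dγ)) =
                2 * C * (r / 2) ^ (-(d i)) * τ ^ (-dγ) := by ring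
            linarith
    · exact ((intervalIntegral.intervalIntegrable_rpow'
        (by linarith : (-1:ℝ) < -dγ)).1).const_mul _
    · filter_upwards [ae_restrict_mem measurableSet_Ioc] with τ hτ
      have h1 : (0:ℝ) < t₀ - τ := by linarith [hτ.2]
      have hct : ContinuousAt (fun x : ℝ => S i x (P i (u τ))) (t₀ - τ) :=
        (hSicont i (P i (u τ))).continuousAt (Ioi_mem_nhds h1)
      have h2 : Tendsto (fun s : ℝ => s - τ) (nhdsWithin t₀ (Ioc 0 T)) (nhds (t₀ - τ)) :=
        ((continuous_id.sub continuous_const).tendsto t₀).mono_left nhdsWithin_le_nhds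
      have h3 := (hct.tendsto.comp h2).sub
        (tendsto_const_nhds (x := S i (t₀ - τ) (P i (u τ))))
      simpa using h3
  have hA' : ∀ᶠ s in nhdsWithin t₀ (Ioc 0 T),
      ‖∫ τ in Ioc 0 (t₀ - r),
        (S i (s - τ) (P i (u τ)) - S i (t₀ - τ) (P i (u τ)))‖ < ε / 3 := by
    have h := hA.norm
    rw [norm_zero] at h
    exact h.eventually_lt_const (by linarith)
  obtain ⟨δ', hδ'0, hδ'⟩ := Metric.mem_nhdsWithin_iff.mp hA'
  refine ⟨min δ' (r / 2), lt_min hδ'0 (by linarith), ?_⟩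
  intro s hsmem hsd
  have hsd1 : dist s t₀ < δ' := lt_of_lt_of_le hsd (min_le_left _ _)
  have hsd2 : dist s t₀ < r / 2 := lt_of_lt_of_le hsd (min_le_right _ _)
  have hAs : ‖∫ τ in Ioc 0 (t₀ - r),
      (S i (s - τ) (P i (u τ)) - S i (t₀ - τ) (P i (u τ)))‖ < ε / 3 :=
    hδ' ⟨Metric.mem_ball.mpr hsd1, hsmem⟩
  have hd' := abs_lt.mp (by rwa [Real.dist_eq] at hsd2)
  have hs1 : t₀ - r < s := by linarith [hd'.1]
  have hBs : ‖∫ τ in Ioc (t₀ - r) s, S i (s - τ) (P i (u τ))‖ < ε / 3 := by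
    refine lt_of_le_of_lt (htail s hs1 hsmem.2) (hkey _ (by linarith) ?_)
    have hre : r / 2 + r = sδ := by rw [hr_def]; ring
    linarith [hd'.2]
  have hB0 : ‖∫ τ in Ioc (t₀ - r) t₀, S i (t₀ - τ) (P i (u τ))‖ < ε / 3 := by
    refine lt_of_le_of_lt (htail t₀ (by linarith) ht₀T) (hkey _ (by linarith) ?_)
    have hre : t₀ - (t₀ - r) = r := by ring
    rw [hre, hr_def]
    linarith
  have hsubs : Ioc 0 (t₀ - r) ⊆ Ioo 0 s := fun τ hτ => ⟨hτ.1, by linarith [hτ.2]⟩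
  have hsubt : Ioc 0 (t₀ - r) ⊆ Ioo 0 t₀ := fun τ hτ => ⟨hτ.1, by linarith [hτ.2]⟩
  have hint_s : IntegrableOn (fun τ => S i (s - τ) (P i (u τ))) (Ioc 0 (t₀ - r)) :=
    (part1 s hsmem.1 hsmem.2 i).mono_set hsubs
  have hint_t : IntegrableOn (fun τ => S i (t₀ - τ) (P i (u τ))) (Ioc 0 (t₀ - r)) :=
    (part1 t₀ ht₀0 ht₀T i).mono_set hsubt
  have hsubint : (∫ τ in Ioc 0 (t₀ - r),
      (S i (s - τ) (P i (u τ)) - S i (t₀ - τ) (P i (u τ)))) =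
      (∫ τ in Ioc 0 (t₀ - r), S i (s - τ) (P i (u τ))) -
      ∫ τ in Ioc 0 (t₀ - r), S i (t₀ - τ) (P i (u τ)) :=
    integral_sub hint_s hint_t
  rw [dist_eq_norm, hsplit s hs1 hsmem.2, hsplit t₀ (by linarith) ht₀T]
  have habc : ∀ a b a' b' : Xα, ‖a + b - (a' + b')‖ ≤ ‖a - a'‖ + ‖b‖ + ‖b'‖ := by
    intro a b a' b'
    calc ‖a + b - (a' + b')‖ = ‖a - a' + b + -b'‖ := by
          apply congrArg norm
          abel
      _ ≤ ‖a - a' + b‖ + ‖-b'‖ := norm_add_le _ _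
      _ ≤ ‖a - a'‖ + ‖b‖ + ‖b'‖ := by
          rw [norm_neg]
          exact add_le_add_left (norm_add_le _ _) _
  refine lt_of_le_of_lt (habc _ _ _ _) ?_
  rw [← hsubint] at *
  linarith [hAs, hBs, hB0]
end

section
/- (Iterated perturbations: performing the perturbations sequentially gives the same solution as performing them jointly.) Let u₀ ∈ X_γ. Suppose u : (0,∞) → X_α is strongly measurable with sup_{0<t≤T} t^{d_γ}‖u(t)‖ < ∞ for all T > 0 and satisfies the jointly perturbed equation u(t) = S_{γα}(t)u₀ + ∫_0^t S₁(t−s) P₁ u(s) ds + ∫_0^t S₂(t−s) P₂ u(s) ds for all t > 0, and suppose v : (0,∞) → X_α is strongly measurable with sup_{0<t≤T} t^{d_γ}‖v(t)‖ < ∞ for all T > 0 and satisfies the sequentially perturbed equation v(t) = S¹_{γα}(t)u₀ + ∫_0^t S¹_{2α}(t−s) P₂ v(s) ds for all t > 0. Then u(t) = v(t) for every t > 0. -/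
open MeasureTheory Set
open Filter

section aux

variable {X Z : Type*} [NormedAddCommGroup X] [NormedSpace ℝ X]
  [NormedAddCommGroup Z] [NormedSpace ℝ Z]

/-- helper: from `s^d * x ≤ K` deduce `x ≤ K * s^(-d)`. -/
lemma aux_bound_helper {s d K x : ℝ} (hs : 0 < s) (h : s ^ d * x ≤ K) :
    x ≤ K * s ^ (-d) := by
  have hp : (0:ℝ) < s ^ d := Real.rpow_pos_of_pos hs d
  rw [Real.rpow_neg hs.le, ← div_eq_mul_inv, le_div_iff₀ hp]
  nlinarith

/-- Composition of a strongly continuous operator family with a measurable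
vector-valued function is a.e. strongly measurable. -/
lemma aux_aesm_apply {α : Type*} [MeasurableSpace α] [TopologicalSpace α]
    [OpensMeasurableSpace α] [SecondCountableTopology α]
    (S : ℝ → X →L[ℝ] Z) (hc : ∀ x : X, ContinuousOn (fun a => S a x) (Ioi 0))
    (μ : Measure α) (A : Set α) (hA : MeasurableSet A)
    (g : α → ℝ) (hg : Continuous g) (hgA : ∀ a ∈ A, g a ∈ Ioi (0:ℝ))
    (f : α → X) (hf : AEStronglyMeasurable f (μ.restrict A)) :
    AEStronglyMeasurable (fun a => S (g a) (f a)) (μ.restrict A) := by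
  -- reduce to the strongly measurable representative
  have hsimple : ∀ (ψ : SimpleFunc α X),
      AEStronglyMeasurable (fun a => S (g a) (ψ a)) (μ.restrict A) := by
    intro ψ
    induction ψ using SimpleFunc.induction with
    | @const c E hE =>
      have hcongr : (fun a => S (g a) ((SimpleFunc.piecewise E hE
          (SimpleFunc.const α c) (SimpleFunc.const α 0)) a))
          = E.indicator (fun a => S (g a) c) := by
        funext a
        by_cases ha : a ∈ E <;>
          simp [SimpleFunc.piecewise_apply, ha, Set.indicator_apply]
      rw [hcongr]
      have hbase : AEStronglyMeasurable (fun a => S (g a) c) (μ.restrict A) := by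
        have : ContinuousOn (fun a => S (g a) c) A :=
          (hc c).comp hg.continuousOn hgA
        exact this.aestronglyMeasurable hA
      exact hbase.indicator hE
    | @add f' g' _ hf' hg' =>
      have : (fun a => S (g a) ((f' + g') a))
          = fun a => S (g a) (f' a) + S (g a) (g' a) := by
        funext a; simp [map_add]
      rw [this]; exact hf'.add hg'
  obtain ⟨f', hf'm, hff'⟩ := hf
  have key : AEStronglyMeasurable (fun a => S (g a) (f' a)) (μ.restrict A) := by
    apply aestronglyMeasurable_of_tendsto_ae (f := fun n a => S (g a) (hf'm.approx n a))
      (atTop : Filter ℕ) (fun n => hsimple _)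
    filter_upwards with a
    exact ((S (g a)).continuous.tendsto _).comp (hf'm.tendsto_approx a)
  apply key.congr
  filter_upwards [hff'] with a ha
  rw [ha]

end aux


/-- integrability of `s ^ (-e)` on `Ioc a b`. -/
lemma aux_intOn_rpow {e a b : ℝ} (he : e < 1) (_hab : a ≤ b) :
    IntegrableOn (fun s : ℝ => s ^ (-e)) (Ioc a b) := by
  have h : IntervalIntegrable (fun s : ℝ => s ^ (-e)) volume a b :=
    intervalIntegral.intervalIntegrable_rpow' (by linarith)
  exact (intervalIntegrable_iff_integrableOn_Ioc_of_le _hab).mp h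

/-- integrability of `(t-s) ^ (-d)` on `Ioc a b`. -/
lemma aux_intOn_rpow_sub {d t a b : ℝ} (hd : d < 1) (hab : a ≤ b) :
    IntegrableOn (fun s : ℝ => (t - s) ^ (-d)) (Ioc a b) := by
  have h : IntervalIntegrable (fun s : ℝ => s ^ (-d)) volume (t - a) (t - b) :=
    intervalIntegral.intervalIntegrable_rpow' (by linarith)
  have h2 := h.comp_sub_left t
  simp only [sub_sub_cancel] at h2
  exact (intervalIntegrable_iff_integrableOn_Ioc_of_le hab).mp h2

/-- `∫_{Ioc a b} s^(-e) ≤ b^(1-e)/(1-e)` for `0 ≤ a ≤ b`, `e < 1`. -/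
lemma aux_int_rpow_le {e a b : ℝ} (he : e < 1) (ha : 0 ≤ a) (hab : a ≤ b) :
    ∫ s in Ioc a b, s ^ (-e) ≤ b ^ (1 - e) / (1 - e) := by
  have h1 : ∫ s in Ioc a b, s ^ (-e) = ∫ s in a..b, s ^ (-e) :=
    (intervalIntegral.integral_of_le hab).symm
  rw [h1, integral_rpow (Or.inl (by linarith))]
  have he' : -e + 1 = 1 - e := by ring
  rw [he']
  have ha' : (0:ℝ) ≤ a ^ (1 - e) := Real.rpow_nonneg ha _
  rw [div_le_div_iff_of_pos_right (by linarith)]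
  linarith

/-- `∫_{Ioo a b} (t-s)^(-d) ≤ (t-a)^(1-d)/(1-d)` for `a ≤ b ≤ t`, `0 ≤ d < 1`. -/
lemma aux_int_rpow_sub_le {d t a b : ℝ} (hd : d < 1) (hab : a ≤ b) (hbt : b ≤ t) :
    ∫ s in Ioc a b, (t - s) ^ (-d) ≤ (t - a) ^ (1 - d) / (1 - d) := by
  have h1 : ∫ s in Ioc a b, (t - s) ^ (-d) = ∫ s in a..b, (t - s) ^ (-d) :=
    (intervalIntegral.integral_of_le hab).symm
  rw [h1, intervalIntegral.integral_comp_sub_left (fun x : ℝ => x ^ (-d)) t,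
    integral_rpow (Or.inl (by linarith))]
  have he' : -d + 1 = 1 - d := by ring
  rw [he']
  have ha' : (0:ℝ) ≤ (t - b) ^ (1 - d) := Real.rpow_nonneg (by linarith) _
  rw [div_le_div_iff_of_pos_right (by linarith)]
  linarith

/-- integrability of the doubly singular kernel. -/
lemma aux_kernelIntegrable {d e t : ℝ} (hd0 : 0 ≤ d) (hd1 : d < 1)
    (he0 : 0 ≤ e) (he1 : e < 1) (ht : 0 < t) :
    IntegrableOn (fun s : ℝ => (t - s) ^ (-d) * s ^ (-e)) (Ioo 0 t) := by
  have hmeas : Measurable (fun s : ℝ => (t - s) ^ (-d) * s ^ (-e)) := by fun_prop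
  have hsplit : Ioo (0:ℝ) t = Ioc 0 (t/2) ∪ Ioo (t/2) t := by
    ext s; simp only [mem_Ioo, mem_Ioc, mem_union]
    constructor
    · rintro ⟨h1, h2⟩
      rcases le_or_gt s (t/2) with h | h
      · exact Or.inl ⟨h1, h⟩
      · exact Or.inr ⟨h, h2⟩
    · rintro (⟨h1, h2⟩ | ⟨h1, h2⟩)
      · exact ⟨h1, by linarith⟩
      · constructor <;> linarith
  rw [hsplit]
  apply IntegrableOn.union
  · -- on Ioc 0 (t/2) : (t-s)^(-d) ≤ (t/2)^(-d)
    apply Integrable.mono' (g := fun s => (t/2) ^ (-d) * s ^ (-e))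
      ((aux_intOn_rpow he1 (by linarith)).const_mul _)
      (hmeas.aestronglyMeasurable.restrict)
    rw [ae_restrict_iff' measurableSet_Ioc]
    filter_upwards with s hs
    obtain ⟨hs1, hs2⟩ := hs
    have h1 : (0:ℝ) < t - s := by linarith
    have h2 : (t - s) ^ (-d) ≤ (t/2) ^ (-d) :=
      Real.rpow_le_rpow_of_nonpos (by linarith) (by linarith) (by linarith)
    have h3 : (0:ℝ) ≤ s ^ (-e) := Real.rpow_nonneg hs1.le _
    have h4 : (0:ℝ) ≤ (t - s) ^ (-d) := Real.rpow_nonneg h1.le _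
    rw [Real.norm_of_nonneg (mul_nonneg h4 h3)]
    exact mul_le_mul_of_nonneg_right h2 h3
  · -- on Ioo (t/2) t : s^(-e) ≤ (t/2)^(-e)
    apply IntegrableOn.mono_set (t := Ioc (t/2) t) ?_ Ioo_subset_Ioc_self
    apply Integrable.mono' (g := fun s => (t/2) ^ (-e) * (t - s) ^ (-d))
      ((aux_intOn_rpow_sub hd1 (by linarith)).const_mul _)
      (hmeas.aestronglyMeasurable.restrict)
    rw [ae_restrict_iff' measurableSet_Ioc]
    filter_upwards with s hs
    obtain ⟨hs1, hs2⟩ := hs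
    have h0 : (0:ℝ) < s := by linarith
    have h2 : s ^ (-e) ≤ (t/2) ^ (-e) :=
      Real.rpow_le_rpow_of_nonpos (by linarith) (by linarith) (by linarith)
    have h4 : (0:ℝ) ≤ (t - s) ^ (-d) := Real.rpow_nonneg (by linarith) _
    have h3 : (0:ℝ) ≤ s ^ (-e) := Real.rpow_nonneg h0.le _
    rw [Real.norm_of_nonneg (mul_nonneg h4 h3), mul_comm ((t/2) ^ (-e))]
    exact mul_le_mul_of_nonneg_left h2 h4

/-- Quantitative bound on the kernel integral over `Ioo τ t` when `t ≤ τ + ε`. -/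
lemma aux_kernelBound {d e τ t ε : ℝ} (hd0 : 0 ≤ d) (hd1 : d < 1)
    (he0 : 0 ≤ e) (he1 : e < 1) (hτ : 0 ≤ τ) (hτt : τ < t) (htε : t ≤ τ + ε) :
    t ^ e * ∫ s in Ioo τ t, (t - s) ^ (-d) * s ^ (-e)
      ≤ 2 ^ e * ε ^ (1 - d) * (1 / (1 - d) + 1 / (1 - e)) := by
  have ht : 0 < t := lt_of_le_of_lt hτ hτt
  have hhalf : (0:ℝ) < t / 2 := by linarith
  have hε : 0 < ε := by linarith
  have hte : (0:ℝ) < t ^ e := Real.rpow_pos_of_pos ht e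
  have h2e : t ^ e * (t / 2) ^ (-e) = 2 ^ e := by
    rw [Real.rpow_neg hhalf.le, ← div_eq_mul_inv, ← Real.div_rpow ht.le hhalf.le]
    have : t / (t / 2) = 2 := by field_simp
    rw [this]
  have hεd : (0:ℝ) ≤ ε ^ (1 - d) := Real.rpow_nonneg hε.le _
  have hker : IntegrableOn (fun s : ℝ => (t - s) ^ (-d) * s ^ (-e)) (Ioo τ t) :=
    (aux_kernelIntegrable hd0 hd1 he0 he1 ht).mono_set (Ioo_subset_Ioo hτ le_rfl)
  rcases le_or_gt (t / 2) τ with hcase | hcase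
  · -- τ ≥ t/2 : use s^(-e) ≤ (t/2)^(-e)
    have hmono : ∫ s in Ioo τ t, (t - s) ^ (-d) * s ^ (-e)
        ≤ ∫ s in Ioo τ t, (t / 2) ^ (-e) * (t - s) ^ (-d) := by
      apply setIntegral_mono_on hker ?_ measurableSet_Ioo ?_
      · exact IntegrableOn.mono_set ((aux_intOn_rpow_sub hd1 hτt.le).const_mul _)
          Ioo_subset_Ioc_self
      · intro s hs
        have h2 : s ^ (-e) ≤ (t / 2) ^ (-e) :=
          Real.rpow_le_rpow_of_nonpos hhalf (le_trans hcase hs.1.le) (by linarith)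
        have h4 : (0:ℝ) ≤ (t - s) ^ (-d) := Real.rpow_nonneg (by linarith [hs.2]) _
        rw [mul_comm ((t/2) ^ (-e))]
        exact mul_le_mul_of_nonneg_left h2 h4
    have hint : ∫ s in Ioo τ t, (t - s) ^ (-d) ≤ ε ^ (1 - d) / (1 - d) := by
      rw [← integral_Ioc_eq_integral_Ioo]
      refine (aux_int_rpow_sub_le hd1 hτt.le le_rfl).trans ?_
      apply div_le_div_of_nonneg_right ?_ (by linarith)
      exact Real.rpow_le_rpow (by linarith) (by linarith) (by linarith)
    have hpull : ∫ s in Ioo τ t, (t / 2) ^ (-e) * (t - s) ^ (-d)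
        = (t / 2) ^ (-e) * ∫ s in Ioo τ t, (t - s) ^ (-d) := integral_const_mul _ _
    calc t ^ e * ∫ s in Ioo τ t, (t - s) ^ (-d) * s ^ (-e)
        ≤ t ^ e * ((t / 2) ^ (-e) * ∫ s in Ioo τ t, (t - s) ^ (-d)) := by
          rw [← hpull]
          exact mul_le_mul_of_nonneg_left hmono hte.le
      _ ≤ t ^ e * ((t / 2) ^ (-e) * (ε ^ (1 - d) / (1 - d))) := by
          apply mul_le_mul_of_nonneg_left ?_ hte.le
          exact mul_le_mul_of_nonneg_left hint (Real.rpow_nonneg hhalf.le _)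
      _ = 2 ^ e * (ε ^ (1 - d) / (1 - d)) := by rw [← mul_assoc, h2e]
      _ ≤ 2 ^ e * ε ^ (1 - d) * (1 / (1 - d) + 1 / (1 - e)) := by
          have h2pos : (0:ℝ) < 2 ^ e := Real.rpow_pos_of_pos (by norm_num) e
          have h1e : (0:ℝ) < 1 / (1 - e) := by
            have : (0:ℝ) < 1 - e := by linarith
            positivity
          rw [div_eq_mul_inv, ← mul_assoc]
          have : (2:ℝ) ^ e * ε ^ (1 - d) * (1 - d)⁻¹
              ≤ 2 ^ e * ε ^ (1 - d) * (1 / (1 - d)) := by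
            rw [one_div]
          nlinarith [mul_nonneg (mul_nonneg h2pos.le hεd) h1e.le]
  · -- τ < t/2 : split at t/2
    have hεhalf : t / 2 ≤ ε := by linarith
    have hsplit : Ioo τ t = Ioc τ (t/2) ∪ Ioo (t/2) t := by
      ext s; simp only [mem_Ioo, mem_Ioc, mem_union]
      constructor
      · rintro ⟨h1, h2⟩
        rcases le_or_gt s (t/2) with h | h
        · exact Or.inl ⟨h1, h⟩
        · exact Or.inr ⟨h, h2⟩
      · rintro (⟨h1, h2⟩ | ⟨h1, h2⟩)
        · exact ⟨h1, by linarith⟩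
        · constructor <;> linarith
    have hdisj : Disjoint (Ioc τ (t/2)) (Ioo (t/2) t) := by
      apply Set.disjoint_left.mpr
      rintro s ⟨_, h2⟩ ⟨h3, _⟩; linarith
    have hker1 : IntegrableOn (fun s : ℝ => (t - s) ^ (-d) * s ^ (-e)) (Ioc τ (t/2)) := by
      rw [hsplit] at hker; exact hker.mono_set subset_union_left
    have hker2 : IntegrableOn (fun s : ℝ => (t - s) ^ (-d) * s ^ (-e)) (Ioo (t/2) t) := by
      rw [hsplit] at hker; exact hker.mono_set subset_union_right
    rw [hsplit, setIntegral_union hdisj measurableSet_Ioo hker1 hker2]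
    -- bound first piece
    have hI1 : ∫ s in Ioc τ (t/2), (t - s) ^ (-d) * s ^ (-e)
        ≤ (t/2) ^ (-d) * ((t/2) ^ (1 - e) / (1 - e)) := by
      have hstep : ∫ s in Ioc τ (t/2), (t - s) ^ (-d) * s ^ (-e)
          ≤ ∫ s in Ioc τ (t/2), (t/2) ^ (-d) * s ^ (-e) := by
        apply setIntegral_mono_on hker1
          ((aux_intOn_rpow he1 hcase.le).const_mul _) measurableSet_Ioc
        intro s hs
        have h2 : (t - s) ^ (-d) ≤ (t/2) ^ (-d) :=
          Real.rpow_le_rpow_of_nonpos hhalf (by linarith [hs.2]) (by linarith)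
        have h3 : (0:ℝ) ≤ s ^ (-e) := Real.rpow_nonneg (by linarith [hs.1]) _
        exact mul_le_mul_of_nonneg_right h2 h3
      rw [integral_const_mul] at hstep
      refine hstep.trans ?_
      apply mul_le_mul_of_nonneg_left ?_ (Real.rpow_nonneg hhalf.le _)
      exact aux_int_rpow_le he1 hτ hcase.le
    -- bound second piece
    have hI2 : ∫ s in Ioo (t/2) t, (t - s) ^ (-d) * s ^ (-e)
        ≤ (t/2) ^ (-e) * ((t/2) ^ (1 - d) / (1 - d)) := by
      have hstep : ∫ s in Ioo (t/2) t, (t - s) ^ (-d) * s ^ (-e)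
          ≤ ∫ s in Ioo (t/2) t, (t/2) ^ (-e) * (t - s) ^ (-d) := by
        apply setIntegral_mono_on hker2
          (IntegrableOn.mono_set
            ((aux_intOn_rpow_sub hd1 (by linarith : t/2 ≤ t)).const_mul _)
            Ioo_subset_Ioc_self) measurableSet_Ioo
        intro s hs
        have h2 : s ^ (-e) ≤ (t/2) ^ (-e) :=
          Real.rpow_le_rpow_of_nonpos hhalf hs.1.le (by linarith)
        have h4 : (0:ℝ) ≤ (t - s) ^ (-d) := Real.rpow_nonneg (by linarith [hs.2]) _
        rw [mul_comm ((t/2) ^ (-e))]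
        exact mul_le_mul_of_nonneg_left h2 h4
      rw [integral_const_mul] at hstep
      refine hstep.trans ?_
      apply mul_le_mul_of_nonneg_left ?_ (Real.rpow_nonneg hhalf.le _)
      have := aux_int_rpow_sub_le (t := t) (a := t/2) (b := t) hd1 (by linarith) le_rfl
      rw [← integral_Ioc_eq_integral_Ioo]
      refine this.trans ?_
      have : t - t/2 = t/2 := by ring
      rw [this]
    -- combine
    have hprod : t ^ e * ((t/2) ^ (-d) * (t/2) ^ (1 - e)) = 2 ^ e * (t/2) ^ (1 - d) := by
      rw [← Real.rpow_add hhalf]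
      have hx : -d + (1 - e) = -e + (1 - d) := by ring
      rw [hx, Real.rpow_add hhalf, ← mul_assoc, h2e]
    have hprod2 : t ^ e * ((t/2) ^ (-e) * (t/2) ^ (1 - d)) = 2 ^ e * (t/2) ^ (1 - d) := by
      rw [← mul_assoc, h2e]
    have hmon : (t/2) ^ (1 - d) ≤ ε ^ (1 - d) :=
      Real.rpow_le_rpow hhalf.le hεhalf (by linarith)
    have h2pos : (0:ℝ) ≤ (2:ℝ) ^ e := (Real.rpow_pos_of_pos (by norm_num) e).le
    have key1 : t ^ e * ((t/2) ^ (-d) * ((t/2) ^ (1 - e) / (1 - e)))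
        ≤ 2 ^ e * ε ^ (1 - d) * (1 / (1 - e)) := by
      have hre : t ^ e * ((t/2) ^ (-d) * ((t/2) ^ (1 - e) / (1 - e)))
          = t ^ e * ((t/2) ^ (-d) * (t/2) ^ (1 - e)) * (1 / (1 - e)) := by ring
      rw [hre, hprod]
      have hinv : (0:ℝ) ≤ 1 / (1 - e) := by
        have : (0:ℝ) < 1 - e := by linarith
        positivity
      exact mul_le_mul_of_nonneg_right (mul_le_mul_of_nonneg_left hmon h2pos) hinv
    have key2 : t ^ e * ((t/2) ^ (-e) * ((t/2) ^ (1 - d) / (1 - d)))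
        ≤ 2 ^ e * ε ^ (1 - d) * (1 / (1 - d)) := by
      have hre : t ^ e * ((t/2) ^ (-e) * ((t/2) ^ (1 - d) / (1 - d)))
          = t ^ e * ((t/2) ^ (-e) * (t/2) ^ (1 - d)) * (1 / (1 - d)) := by ring
      rw [hre, hprod2]
      have hinv : (0:ℝ) ≤ 1 / (1 - d) := by
        have : (0:ℝ) < 1 - d := by linarith
        positivity
      exact mul_le_mul_of_nonneg_right (mul_le_mul_of_nonneg_left hmon h2pos) hinv
    have hI1' := mul_le_mul_of_nonneg_left hI1 hte.le
    have hI2' := mul_le_mul_of_nonneg_left hI2 hte.le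
    rw [mul_add]
    have hsum : 2 ^ e * ε ^ (1 - d) * (1 / (1 - e)) + 2 ^ e * ε ^ (1 - d) * (1 / (1 - d))
        = 2 ^ e * ε ^ (1 - d) * (1 / (1 - d) + 1 / (1 - e)) := by ring
    linarith [hI1'.trans key1, hI2'.trans key2]

/-- plain form of the kernel bound on `Ioo 0 t`. -/
lemma aux_kernel_int_le {d e t : ℝ} (hd0 : 0 ≤ d) (hd1 : d < 1)
    (he0 : 0 ≤ e) (he1 : e < 1) (ht : 0 < t) :
    ∫ s in Ioo 0 t, (t - s) ^ (-d) * s ^ (-e)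
      ≤ (2 ^ e * t ^ (1 - d) * (1 / (1 - d) + 1 / (1 - e))) * t ^ (-e) := by
  apply aux_bound_helper ht
  exact aux_kernelBound hd0 hd1 he0 he1 le_rfl ht (by linarith)

section vecint

variable {Y Z : Type*} [NormedAddCommGroup Y] [NormedSpace ℝ Y]
  [NormedAddCommGroup Z] [NormedSpace ℝ Z]

/-- integrability of `s ↦ S (t - s) (f s)` on `Ioo 0 t` given the singular bounds. -/
lemma aux_intAux (S : ℝ → Y →L[ℝ] Z) (hc : ∀ y : Y, ContinuousOn (fun a => S a y) (Ioi 0))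
    {t d e Mc Kc : ℝ} (ht : 0 < t) (hd0 : 0 ≤ d) (hd1 : d < 1) (he0 : 0 ≤ e) (he1 : e < 1)
    (hS : ∀ a : ℝ, 0 < a → a ≤ t → ‖S a‖ ≤ Mc * a ^ (-d))
    (f : ℝ → Y) (hf : AEStronglyMeasurable f (volume.restrict (Ioo 0 t)))
    (hfb : ∀ s : ℝ, 0 < s → s < t → ‖f s‖ ≤ Kc * s ^ (-e)) :
    IntegrableOn (fun s => S (t - s) (f s)) (Ioo 0 t) := by
  have hmeas : AEStronglyMeasurable (fun s => S (t - s) (f s))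
      (volume.restrict (Ioo 0 t)) := by
    apply aux_aesm_apply S hc volume (Ioo 0 t) measurableSet_Ioo (fun s => t - s)
      (by continuity) ?_ f hf
    intro s hs
    exact sub_pos.mpr hs.2
  apply Integrable.mono' (g := fun s => (Mc * Kc) * ((t - s) ^ (-d) * s ^ (-e)))
    ((aux_kernelIntegrable hd0 hd1 he0 he1 ht).const_mul _) hmeas
  rw [ae_restrict_iff' measurableSet_Ioo]
  filter_upwards with s hs
  obtain ⟨hs1, hs2⟩ := hs
  have h1 : 0 < t - s := by linarith
  have hSb := hS (t - s) h1 (by linarith)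
  have hfb' := hfb s hs1 hs2
  calc ‖S (t - s) (f s)‖ ≤ ‖S (t - s)‖ * ‖f s‖ := (S (t - s)).le_opNorm _
    _ ≤ (Mc * (t - s) ^ (-d)) * (Kc * s ^ (-e)) := by
        apply mul_le_mul hSb hfb' (norm_nonneg _) (le_trans (norm_nonneg _) hSb)
    _ = (Mc * Kc) * ((t - s) ^ (-d) * s ^ (-e)) := by ring

end vecint

/-- Singular Gronwall lemma: a nonnegative locally `s^(-dγ)`-bounded function
satisfying a homogeneous Volterra inequality with two weakly singular kernels
vanishes. -/
lemma aux_gronwall (w : ℝ → ℝ) (T K C₁ C₂ dγ d₁ d₂ : ℝ)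
    (hT : 0 < T) (hC₁ : 0 ≤ C₁) (hC₂ : 0 ≤ C₂)
    (hdγ0 : 0 ≤ dγ) (hdγ1 : dγ < 1) (hd₁0 : 0 ≤ d₁) (hd₁1 : d₁ < 1)
    (hd₂0 : 0 ≤ d₂) (hd₂1 : d₂ < 1)
    (hwm : AEStronglyMeasurable w (volume.restrict (Ioi 0)))
    (hw0 : ∀ s, 0 ≤ w s)
    (hwb : ∀ s, 0 < s → s ≤ T → w s ≤ K * s ^ (-dγ))
    (hint : ∀ t, 0 < t → t ≤ T →
      w t ≤ C₁ * (∫ s in Ioo 0 t, (t - s) ^ (-d₁) * w s)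
          + C₂ * (∫ s in Ioo 0 t, (t - s) ^ (-d₂) * w s)) :
    ∀ t, 0 < t → t ≤ T → w t = 0 := by
  have hK : 0 ≤ K := by
    have h1 := hwb T hT le_rfl
    have h2 := hw0 T
    have h3 : 0 < T ^ (-dγ) := Real.rpow_pos_of_pos hT _
    nlinarith
  -- choose ε
  set m₁ : ℝ := 1 / (1 - d₁) + 1 / (1 - dγ) with hm₁
  set m₂ : ℝ := 1 / (1 - d₂) + 1 / (1 - dγ) with hm₂
  set k : ℝ → ℝ := fun x => C₁ * (2 ^ dγ * x ^ (1 - d₁) * m₁)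
    + C₂ * (2 ^ dγ * x ^ (1 - d₂) * m₂) with hk
  have hktend : Filter.Tendsto k (nhdsWithin 0 (Ioi 0)) (nhds 0) := by
    have hcont : ContinuousAt k 0 := by
      apply ContinuousAt.add
      · exact (continuousAt_const.mul ((continuousAt_const.mul
          (Real.continuousAt_rpow_const 0 _ (Or.inr (by linarith)))).mul
          continuousAt_const))
      · exact (continuousAt_const.mul ((continuousAt_const.mul
          (Real.continuousAt_rpow_const 0 _ (Or.inr (by linarith)))).mul
          continuousAt_const))
    have hk0 : k 0 = 0 := by
      simp only [hk]
      rw [Real.zero_rpow (by linarith), Real.zero_rpow (by linarith)]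
      ring
    have := hcont.continuousWithinAt (s := Ioi (0:ℝ))
    rw [ContinuousWithinAt, hk0] at this
    exact this
  obtain ⟨ε, hεk, hε⟩ :=
    ((hktend.eventually_lt_const (by norm_num : (0:ℝ) < 1/2)).and
      self_mem_nhdsWithin).exists
  replace hε : (0:ℝ) < ε := hε
  -- main induction on n : w = 0 on (0, min (n ε) T]
  have main : ∀ n : ℕ, ∀ s, 0 < s → s ≤ min ((n : ℝ) * ε) T → w s = 0 := by
    intro n
    induction n with
    | zero =>
      intro s hs hsle
      exfalso
      have h1 := le_trans hsle (min_le_left _ _)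
      norm_num at h1
      linarith
    | succ n ih =>
      set τ : ℝ := min ((n : ℝ) * ε) T with hτdef
      have hτ0 : 0 ≤ τ := le_min (by positivity) hT.le
      have inner : ∀ m : ℕ, ∀ s, 0 < s → s ≤ min (((n : ℝ) + 1) * ε) T →
          w s ≤ (1/2 : ℝ) ^ m * (K * s ^ (-dγ)) := by
        intro m
        induction m with
        | zero =>
          intro s hs hsle
          simpa using hwb s hs (le_trans hsle (min_le_right _ _))
        | succ m ihm =>
          intro s hs hsle
          rcases le_or_gt s τ with hsτ | hsτ
          · rw [ih s hs hsτ]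
            have : (0:ℝ) ≤ s ^ (-dγ) := Real.rpow_nonneg hs.le _
            positivity
          · have hsT : s ≤ T := le_trans hsle (min_le_right _ _)
            have hnε : (n : ℝ) * ε < T := by
              by_contra hcon
              push_neg at hcon
              have hττ : τ = T := min_eq_right hcon
              rw [hττ] at hsτ
              linarith
            have hττ : τ = (n : ℝ) * ε := min_eq_left hnε.le
            have hsε : s ≤ τ + ε := by
              have h1 : s ≤ ((n : ℝ) + 1) * ε := le_trans hsle (min_le_left _ _)
              rw [hττ]; linarith
            -- integrability of the two integrands
            have hII : ∀ d' : ℝ, 0 ≤ d' → d' < 1 →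
                IntegrableOn (fun σ => (s - σ) ^ (-d') * w σ) (Ioo 0 s) := by
              intro d' hd'0 hd'1
              have hwms : AEStronglyMeasurable w (volume.restrict (Ioo 0 s)) :=
                hwm.mono_measure (Measure.restrict_mono Ioo_subset_Ioi_self le_rfl)
              have hkm : AEStronglyMeasurable (fun σ : ℝ => (s - σ) ^ (-d'))
                  (volume.restrict (Ioo 0 s)) := by
                apply Measurable.aestronglyMeasurable; fun_prop
              apply Integrable.mono'
                (g := fun σ => K * ((s - σ) ^ (-d') * σ ^ (-dγ)))
                ((aux_kernelIntegrable hd'0 hd'1 hdγ0 hdγ1 hs).const_mul _)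
                (hkm.mul hwms)
              rw [ae_restrict_iff' measurableSet_Ioo]
              filter_upwards with σ hσ
              obtain ⟨hσ1, hσ2⟩ := hσ
              have hker : (0:ℝ) ≤ (s - σ) ^ (-d') := Real.rpow_nonneg (by linarith) _
              have hwσ := hwb σ hσ1 (by linarith)
              show ‖(s - σ) ^ (-d') * w σ‖ ≤ K * ((s - σ) ^ (-d') * σ ^ (-dγ))
              rw [Real.norm_of_nonneg (mul_nonneg hker (hw0 σ))]
              calc (s - σ) ^ (-d') * w σ ≤ (s - σ) ^ (-d') * (K * σ ^ (-dγ)) :=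
                    mul_le_mul_of_nonneg_left hwσ hker
                _ = K * ((s - σ) ^ (-d') * σ ^ (-dγ)) := by ring
            -- estimate of each integral
            have hIest : ∀ d' : ℝ, ∀ md : ℝ, 0 ≤ d' → d' < 1 →
                md = 1 / (1 - d') + 1 / (1 - dγ) →
                ∫ σ in Ioo 0 s, (s - σ) ^ (-d') * w σ
                  ≤ ((1/2:ℝ) ^ m * (K * s ^ (-dγ))) * (2 ^ dγ * ε ^ (1 - d') * md) := by
              intro d' md hd'0 hd'1 hmd
              have hsplitI : Ioo (0:ℝ) s = Ioc 0 τ ∪ Ioo τ s := by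
                ext σ; simp only [mem_Ioo, mem_Ioc, mem_union]
                constructor
                · rintro ⟨h1, h2⟩
                  rcases le_or_gt σ τ with h | h
                  · exact Or.inl ⟨h1, h⟩
                  · exact Or.inr ⟨h, h2⟩
                · rintro (⟨h1, h2⟩ | ⟨h1, h2⟩)
                  · exact ⟨h1, by linarith⟩
                  · constructor <;> linarith
              have hdisjI : Disjoint (Ioc (0:ℝ) τ) (Ioo τ s) := by
                apply Set.disjoint_left.mpr
                rintro σ ⟨_, h2⟩ ⟨h3, _⟩; linarith
              have hIIs := hII d' hd'0 hd'1
              have hk1 : IntegrableOn (fun σ => (s - σ) ^ (-d') * w σ) (Ioc 0 τ) := by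
                rw [hsplitI] at hIIs; exact hIIs.mono_set subset_union_left
              have hk2 : IntegrableOn (fun σ => (s - σ) ^ (-d') * w σ) (Ioo τ s) := by
                rw [hsplitI] at hIIs; exact hIIs.mono_set subset_union_right
              rw [hsplitI, setIntegral_union hdisjI measurableSet_Ioo hk1 hk2]
              have hzero : ∫ σ in Ioc (0:ℝ) τ, (s - σ) ^ (-d') * w σ = 0 := by
                rw [setIntegral_congr_fun measurableSet_Ioc
                  (g := fun _ => (0:ℝ)) ?_, integral_zero]
                intro σ hσ
                show (s - σ) ^ (-d') * w σ = 0
                rw [ih σ hσ.1 hσ.2, mul_zero]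
              rw [hzero, zero_add]
              have hmono : ∫ σ in Ioo τ s, (s - σ) ^ (-d') * w σ
                  ≤ ∫ σ in Ioo τ s, ((1/2:ℝ) ^ m * K) * ((s - σ) ^ (-d') * σ ^ (-dγ)) := by
                apply setIntegral_mono_on hk2
                  (((aux_kernelIntegrable hd'0 hd'1 hdγ0 hdγ1 hs).mono_set
                    (Ioo_subset_Ioo hτ0 le_rfl)).const_mul _) measurableSet_Ioo
                intro σ hσ
                have hσ0 : 0 < σ := lt_of_le_of_lt hτ0 hσ.1
                have hker : (0:ℝ) ≤ (s - σ) ^ (-d') := Real.rpow_nonneg (by linarith [hσ.2]) _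
                have hwσ := ihm σ hσ0 (le_trans hσ.2.le hsle)
                calc (s - σ) ^ (-d') * w σ
                    ≤ (s - σ) ^ (-d') * ((1/2:ℝ) ^ m * (K * σ ^ (-dγ))) :=
                      mul_le_mul_of_nonneg_left hwσ hker
                  _ = ((1/2:ℝ) ^ m * K) * ((s - σ) ^ (-d') * σ ^ (-dγ)) := by ring
              rw [integral_const_mul] at hmono
              refine hmono.trans ?_
              have hkb : ∫ σ in Ioo τ s, (s - σ) ^ (-d') * σ ^ (-dγ)
                  ≤ (2 ^ dγ * ε ^ (1 - d') * md) * s ^ (-dγ) := by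
                apply aux_bound_helper hs
                rw [hmd]
                exact aux_kernelBound hd'0 hd'1 hdγ0 hdγ1 hτ0 hsτ hsε
              have hc : (0:ℝ) ≤ (1/2:ℝ) ^ m * K := by positivity
              calc ((1/2:ℝ) ^ m * K) * ∫ σ in Ioo τ s, (s - σ) ^ (-d') * σ ^ (-dγ)
                  ≤ ((1/2:ℝ) ^ m * K) * ((2 ^ dγ * ε ^ (1 - d') * md) * s ^ (-dγ)) :=
                    mul_le_mul_of_nonneg_left hkb hc
                _ = ((1/2:ℝ) ^ m * (K * s ^ (-dγ))) * (2 ^ dγ * ε ^ (1 - d') * md) := by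
                    ring
            have hI₁ := hIest d₁ m₁ hd₁0 hd₁1 hm₁
            have hI₂ := hIest d₂ m₂ hd₂0 hd₂1 hm₂
            set q : ℝ := (1/2:ℝ) ^ m * (K * s ^ (-dγ)) with hqdef
            have hq : 0 ≤ q := by
              have : (0:ℝ) ≤ s ^ (-dγ) := Real.rpow_nonneg hs.le _
              positivity
            have hws := hint s hs hsT
            have hfin : C₁ * (∫ σ in Ioo 0 s, (s - σ) ^ (-d₁) * w σ)
                + C₂ * (∫ σ in Ioo 0 s, (s - σ) ^ (-d₂) * w σ) ≤ q * k ε := by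
              have h1 := mul_le_mul_of_nonneg_left hI₁ hC₁
              have h2 := mul_le_mul_of_nonneg_left hI₂ hC₂
              have hkε : q * k ε = C₁ * (q * (2 ^ dγ * ε ^ (1 - d₁) * m₁))
                  + C₂ * (q * (2 ^ dγ * ε ^ (1 - d₂) * m₂)) := by
                simp only [hk]; ring
              rw [hkε]
              exact add_le_add h1 h2
            have hhalf2 : q * k ε ≤ q * (1/2) :=
              mul_le_mul_of_nonneg_left hεk.le hq
            calc w s ≤ q * k ε := le_trans hws hfin
              _ ≤ q * (1/2) := hhalf2
              _ = (1/2:ℝ) ^ (m + 1) * (K * s ^ (-dγ)) := by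
                  rw [hqdef, pow_succ]; ring
      -- pass to the limit in m
      intro s hs hsle
      push_cast at hsle
      have hlim : Filter.Tendsto (fun m : ℕ => (1/2:ℝ) ^ m * (K * s ^ (-dγ)))
          Filter.atTop (nhds 0) := by
        have := (tendsto_pow_atTop_nhds_zero_of_lt_one
          (by norm_num : (0:ℝ) ≤ 1/2) (by norm_num : (1/2:ℝ) < 1)).mul_const
          (K * s ^ (-dγ))
        simpa using this
      have hle : w s ≤ 0 := by
        apply ge_of_tendsto hlim
        filter_upwards with m
        exact inner m s hs hsle
      exact le_antisymm hle (hw0 s)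
  intro t ht htT
  obtain ⟨n, hn⟩ := exists_nat_ge (T / ε)
  have hTn : T ≤ (n : ℝ) * ε := by
    rw [div_le_iff₀ hε] at hn
    linarith
  exact main n t ht (le_trans htT (le_min hTn le_rfl) |>.trans (le_refl _))

/-- chaining operator norm bounds. -/
lemma aux_opnorm_chain {Y Z : Type*} [NormedAddCommGroup Y] [NormedSpace ℝ Y]
    [NormedAddCommGroup Z] [NormedSpace ℝ Z]
    (A : Y →L[ℝ] Z) {y : Y} {a b : ℝ} (hA : ‖A‖ ≤ a) (hy : ‖y‖ ≤ b) :
    ‖A y‖ ≤ a * b :=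
  le_trans (A.le_opNorm y)
    (mul_le_mul hA hy (norm_nonneg _) (le_trans (norm_nonneg _) hA))

/-- Iterated perturbations: performing the two perturbations `P₁, P₂`
sequentially (first perturbing by `P₁`, obtaining the families `S¹_{γα}` and
`S¹_{2α}` characterised by their Duhamel identities, and then perturbing by
`P₂`) yields the same solution as performing them jointly. -/
theorem iterated_perturbations_eq_joint
    {Xγ Xα Xβ₁ Xβ₂ : Type*}
    [NormedAddCommGroup Xγ] [NormedSpace ℝ Xγ] [CompleteSpace Xγ]
    [NormedAddCommGroup Xα] [NormedSpace ℝ Xα] [CompleteSpace Xα]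
    [NormedAddCommGroup Xβ₁] [NormedSpace ℝ Xβ₁] [CompleteSpace Xβ₁]
    [NormedAddCommGroup Xβ₂] [NormedSpace ℝ Xβ₂] [CompleteSpace Xβ₂]
    (Sγα : ℝ → Xγ →L[ℝ] Xα)
    (S₁ : ℝ → Xβ₁ →L[ℝ] Xα) (S₂ : ℝ → Xβ₂ →L[ℝ] Xα)
    (hScont : ∀ x : Xγ, ContinuousOn (fun t => (Sγα t) x) (Ioi 0))
    (hS₁cont : ∀ y : Xβ₁, ContinuousOn (fun t => (S₁ t) y) (Ioi 0))
    (hS₂cont : ∀ y : Xβ₂, ContinuousOn (fun t => (S₂ t) y) (Ioi 0))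
    (dγ d₁ d₂ : ℝ) (hdγ0 : 0 ≤ dγ) (hdγ1 : dγ < 1)
    (hd₁0 : 0 ≤ d₁) (hd₁1 : d₁ < 1) (hd₂0 : 0 ≤ d₂) (hd₂1 : d₂ < 1)
    (P₁ : Xα →L[ℝ] Xβ₁) (P₂ : Xα →L[ℝ] Xβ₂)
    (SPγα : ℝ → Xγ →L[ℝ] Xα) (SP₂α : ℝ → Xβ₂ →L[ℝ] Xα)
    (hSPcont : ∀ x : Xγ, ContinuousOn (fun t => (SPγα t) x) (Ioi 0))
    (hSP₂cont : ∀ y : Xβ₂, ContinuousOn (fun t => (SP₂α t) y) (Ioi 0))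
    (M : ℝ → ℝ)
    (hbound : ∀ T > (0:ℝ), ∀ t : ℝ, 0 < t → t ≤ T →
      ‖Sγα t‖ ≤ M T * t ^ (-dγ) ∧ ‖S₁ t‖ ≤ M T * t ^ (-d₁) ∧
      ‖S₂ t‖ ≤ M T * t ^ (-d₂) ∧ ‖SPγα t‖ ≤ M T * t ^ (-dγ) ∧
      ‖SP₂α t‖ ≤ M T * t ^ (-d₂))
    -- Duhamel identities characterising the families perturbed by `P₁` alone
    (hDuh₁ : ∀ (x : Xγ) (t : ℝ), 0 < t →
      (SPγα t) x = (Sγα t) x + ∫ s in Ioo (0:ℝ) t, (S₁ (t - s)) (P₁ ((SPγα s) x)))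
    (hDuh₂ : ∀ (y : Xβ₂) (t : ℝ), 0 < t →
      (SP₂α t) y = (S₂ t) y + ∫ s in Ioo (0:ℝ) t, (S₁ (t - s)) (P₁ ((SP₂α s) y)))
    (u₀ : Xγ) (u v : ℝ → Xα)
    (humeas : AEStronglyMeasurable u (volume.restrict (Ioi (0:ℝ))))
    (hubd : ∀ T > (0:ℝ), ∃ K : ℝ, ∀ t : ℝ, 0 < t → t ≤ T → t ^ dγ * ‖u t‖ ≤ K)
    -- the jointly perturbed equation for `u`
    (hu : ∀ t > (0:ℝ), u t = (Sγα t) u₀ +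
        (∫ s in Ioo (0:ℝ) t, (S₁ (t - s)) (P₁ (u s))) +
        (∫ s in Ioo (0:ℝ) t, (S₂ (t - s)) (P₂ (u s))))
    (hvmeas : AEStronglyMeasurable v (volume.restrict (Ioi (0:ℝ))))
    (hvbd : ∀ T > (0:ℝ), ∃ K : ℝ, ∀ t : ℝ, 0 < t → t ≤ T → t ^ dγ * ‖v t‖ ≤ K)
    -- the sequentially perturbed equation for `v`
    (hv : ∀ t > (0:ℝ), v t = (SPγα t) u₀ +
        ∫ s in Ioo (0:ℝ) t, (SP₂α (t - s)) (P₂ (v s))) :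
    ∀ t > (0:ℝ), u t = v t := by
  intro t₀ ht₀
  obtain ⟨Ku, hKu⟩ := hubd t₀ ht₀
  obtain ⟨Kv, hKv⟩ := hvbd t₀ ht₀
  have hKu' : ∀ s : ℝ, 0 < s → s ≤ t₀ → ‖u s‖ ≤ Ku * s ^ (-dγ) :=
    fun s h1 h2 => aux_bound_helper h1 (hKu s h1 h2)
  have hKv' : ∀ s : ℝ, 0 < s → s ≤ t₀ → ‖v s‖ ≤ Kv * s ^ (-dγ) :=
    fun s h1 h2 => aux_bound_helper h1 (hKv s h1 h2)
  have hKu0 : 0 ≤ Ku := le_trans (by positivity) (hKu t₀ ht₀ le_rfl)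
  have hKv0 : 0 ≤ Kv := le_trans (by positivity) (hKv t₀ ht₀ le_rfl)
  set Mc := M t₀ with hMc
  have hM1 : ∀ a : ℝ, 0 < a → a ≤ t₀ → ‖S₁ a‖ ≤ Mc * a ^ (-d₁) :=
    fun a h1 h2 => (hbound t₀ ht₀ a h1 h2).2.1
  have hM2 : ∀ a : ℝ, 0 < a → a ≤ t₀ → ‖S₂ a‖ ≤ Mc * a ^ (-d₂) :=
    fun a h1 h2 => (hbound t₀ ht₀ a h1 h2).2.2.1
  have hMP : ∀ a : ℝ, 0 < a → a ≤ t₀ → ‖SPγα a‖ ≤ Mc * a ^ (-dγ) :=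
    fun a h1 h2 => (hbound t₀ ht₀ a h1 h2).2.2.2.1
  have hMP2 : ∀ a : ℝ, 0 < a → a ≤ t₀ → ‖SP₂α a‖ ≤ Mc * a ^ (-d₂) :=
    fun a h1 h2 => (hbound t₀ ht₀ a h1 h2).2.2.2.2
  have hMc0 : 0 ≤ Mc := by
    have h := hM1 t₀ ht₀ le_rfl
    have h2 : 0 < t₀ ^ (-d₁) := Real.rpow_pos_of_pos ht₀ _
    nlinarith [norm_nonneg (S₁ t₀)]
  have humeas' : ∀ b : ℝ, AEStronglyMeasurable u (volume.restrict (Ioo 0 b)) :=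
    fun b => humeas.mono_measure (Measure.restrict_mono Ioo_subset_Ioi_self le_rfl)
  have hvmeas' : ∀ b : ℝ, AEStronglyMeasurable v (volume.restrict (Ioo 0 b)) :=
    fun b => hvmeas.mono_measure (Measure.restrict_mono Ioo_subset_Ioi_self le_rfl)
  -- integrability of the various integrands
  have hIntA : ∀ t : ℝ, 0 < t → t ≤ t₀ →
      IntegrableOn (fun s => (S₁ (t - s)) (P₁ (u s))) (Ioo 0 t) := by
    intro t ht htT
    have hfb : ∀ s : ℝ, 0 < s → s < t → ‖P₁ (u s)‖ ≤ (‖P₁‖ * Ku) * s ^ (-dγ) := by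
      intro s h1 h2
      rw [mul_assoc]
      exact aux_opnorm_chain P₁ le_rfl (hKu' s h1 (h2.le.trans htT))
    exact aux_intAux S₁ hS₁cont ht hd₁0 hd₁1 hdγ0 hdγ1
      (fun a h1 h2 => hM1 a h1 (h2.trans htT)) _
      (P₁.continuous.comp_aestronglyMeasurable (humeas' t)) hfb
  have hIntB : ∀ t : ℝ, 0 < t → t ≤ t₀ →
      IntegrableOn (fun s => (S₁ (t - s)) (P₁ (v s))) (Ioo 0 t) := by
    intro t ht htT
    have hfb : ∀ s : ℝ, 0 < s → s < t → ‖P₁ (v s)‖ ≤ (‖P₁‖ * Kv) * s ^ (-dγ) := by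
      intro s h1 h2
      rw [mul_assoc]
      exact aux_opnorm_chain P₁ le_rfl (hKv' s h1 (h2.le.trans htT))
    exact aux_intAux S₁ hS₁cont ht hd₁0 hd₁1 hdγ0 hdγ1
      (fun a h1 h2 => hM1 a h1 (h2.trans htT)) _
      (P₁.continuous.comp_aestronglyMeasurable (hvmeas' t)) hfb
  have hIntC : ∀ t : ℝ, 0 < t → t ≤ t₀ →
      IntegrableOn (fun s => (S₂ (t - s)) (P₂ (u s))) (Ioo 0 t) := by
    intro t ht htT
    have hfb : ∀ s : ℝ, 0 < s → s < t → ‖P₂ (u s)‖ ≤ (‖P₂‖ * Ku) * s ^ (-dγ) := by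
      intro s h1 h2
      rw [mul_assoc]
      exact aux_opnorm_chain P₂ le_rfl (hKu' s h1 (h2.le.trans htT))
    exact aux_intAux S₂ hS₂cont ht hd₂0 hd₂1 hdγ0 hdγ1
      (fun a h1 h2 => hM2 a h1 (h2.trans htT)) _
      (P₂.continuous.comp_aestronglyMeasurable (humeas' t)) hfb
  have hIntD : ∀ t : ℝ, 0 < t → t ≤ t₀ →
      IntegrableOn (fun s => (S₂ (t - s)) (P₂ (v s))) (Ioo 0 t) := by
    intro t ht htT
    have hfb : ∀ s : ℝ, 0 < s → s < t → ‖P₂ (v s)‖ ≤ (‖P₂‖ * Kv) * s ^ (-dγ) := by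
      intro s h1 h2
      rw [mul_assoc]
      exact aux_opnorm_chain P₂ le_rfl (hKv' s h1 (h2.le.trans htT))
    exact aux_intAux S₂ hS₂cont ht hd₂0 hd₂1 hdγ0 hdγ1
      (fun a h1 h2 => hM2 a h1 (h2.trans htT)) _
      (P₂.continuous.comp_aestronglyMeasurable (hvmeas' t)) hfb
  have hIntE : ∀ t : ℝ, 0 < t → t ≤ t₀ →
      IntegrableOn (fun r => (SP₂α (t - r)) (P₂ (v r))) (Ioo 0 t) := by
    intro t ht htT
    have hfb : ∀ s : ℝ, 0 < s → s < t → ‖P₂ (v s)‖ ≤ (‖P₂‖ * Kv) * s ^ (-dγ) := by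
      intro s h1 h2
      rw [mul_assoc]
      exact aux_opnorm_chain P₂ le_rfl (hKv' s h1 (h2.le.trans htT))
    exact aux_intAux SP₂α hSP₂cont ht hd₂0 hd₂1 hdγ0 hdγ1
      (fun a h1 h2 => hMP2 a h1 (h2.trans htT)) _
      (P₂.continuous.comp_aestronglyMeasurable (hvmeas' t)) hfb
  have hIntG : ∀ t : ℝ, 0 < t → t ≤ t₀ →
      IntegrableOn (fun s => (S₁ (t - s)) (P₁ ((SPγα s) u₀))) (Ioo 0 t) := by
    intro t ht htT
    have hfb : ∀ s : ℝ, 0 < s → s < t →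
        ‖P₁ ((SPγα s) u₀)‖ ≤ (‖P₁‖ * Mc * ‖u₀‖) * s ^ (-dγ) := by
      intro s h1 h2
      calc ‖P₁ ((SPγα s) u₀)‖ ≤ ‖P₁‖ * ((Mc * s ^ (-dγ)) * ‖u₀‖) :=
            aux_opnorm_chain P₁ le_rfl
              (aux_opnorm_chain (SPγα s) (hMP s h1 (h2.le.trans htT)) le_rfl)
        _ = (‖P₁‖ * Mc * ‖u₀‖) * s ^ (-dγ) := by ring
    have hm : AEStronglyMeasurable (fun s => P₁ ((SPγα s) u₀))
        (volume.restrict (Ioo 0 t)) := by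
      apply ContinuousOn.aestronglyMeasurable ?_ measurableSet_Ioo
      exact P₁.continuous.comp_continuousOn
        ((hSPcont u₀).mono (fun s hs => hs.1))
    exact aux_intAux S₁ hS₁cont ht hd₁0 hd₁1 hdγ0 hdγ1
      (fun a h1 h2 => hM1 a h1 (h2.trans htT)) _ hm hfb
  -- Step 1 : v satisfies the jointly perturbed equation
  have hveq : ∀ t : ℝ, 0 < t → t ≤ t₀ → v t = (Sγα t) u₀ +
      (∫ s in Ioo (0:ℝ) t, (S₁ (t - s)) (P₁ (v s))) +
      (∫ s in Ioo (0:ℝ) t, (S₂ (t - s)) (P₂ (v s))) := by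
    intro t ht htT
    -- notation
    set H : ℝ → ℝ → Xα := fun s r => (S₁ (t - s)) (P₁ ((SP₂α (s - r)) (P₂ (v r)))) with hHdef
    set T' : Set (ℝ × ℝ) := {p : ℝ × ℝ | 0 < p.2 ∧ p.2 < p.1 ∧ p.1 < t} with hT'def
    have hT'meas : MeasurableSet T' := by
      have h1 : T' = ({p : ℝ × ℝ | 0 < p.2} ∩ {p : ℝ × ℝ | p.2 < p.1})
          ∩ {p : ℝ × ℝ | p.1 < t} := by
        ext p; simp only [hT'def, mem_setOf_eq, mem_inter_iff, and_assoc]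
      rw [h1]
      exact ((measurableSet_lt measurable_const measurable_snd).inter
        (measurableSet_lt measurable_snd measurable_fst)).inter
        (measurableSet_lt measurable_fst measurable_const)
    set F : ℝ × ℝ → Xα := T'.indicator (fun p => H p.1 p.2) with hFdef
    -- pointwise Duhamel decomposition of the integrand
    have hinner : ∀ s ∈ Ioo (0:ℝ) t,
        (S₁ (t - s)) (P₁ (v s)) - (S₁ (t - s)) (P₁ ((SPγα s) u₀))
          = ∫ r in Ioo (0:ℝ) s, H s r := by
      intro s hs
      have hvdec : v s - (SPγα s) u₀ = ∫ r in Ioo (0:ℝ) s, (SP₂α (s - r)) (P₂ (v r)) :=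
        sub_eq_of_eq_add' (hv s hs.1)
      have h1 : (S₁ (t - s)) (P₁ (v s)) - (S₁ (t - s)) (P₁ ((SPγα s) u₀))
          = ((S₁ (t - s)).comp P₁) (v s - (SPγα s) u₀) := by
        simp [map_sub]
      have hIE : Integrable (fun r => (SP₂α (s - r)) (P₂ (v r)))
          (volume.restrict (Ioo (0:ℝ) s)) := hIntE s hs.1 (hs.2.le.trans htT)
      rw [h1, hvdec, ← ContinuousLinearMap.integral_comp_comm _ hIE]
      rfl
    -- the scalar dominating kernel on the triangle
    set W : ℝ × ℝ → ℝ := T'.indicator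
      (fun p => (t - p.1) ^ (-d₁) * ((p.1 - p.2) ^ (-d₂) * p.2 ^ (-dγ))) with hWdef
    have hWm : Measurable W := by
      apply Measurable.indicator ?_ hT'meas
      fun_prop
    have hWsec : ∀ s ∈ Ioo (0:ℝ) t, (fun r => W (s, r))
        = (Ioo 0 s).indicator (fun r => (t - s) ^ (-d₁) * ((s - r) ^ (-d₂) * r ^ (-dγ))) := by
      intro s hst
      funext r
      rw [hWdef]
      by_cases hr : r ∈ Ioo (0:ℝ) s
      · rw [indicator_of_mem hr,
          indicator_of_mem (show (s, r) ∈ T' from ⟨hr.1, hr.2, hst.2⟩)]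
      · rw [indicator_of_notMem hr,
          indicator_of_notMem (show (s, r) ∉ T' from fun hmem => hr ⟨hmem.1, hmem.2.1⟩)]
    have hWsec0 : ∀ s : ℝ, s ∉ Ioo (0:ℝ) t → (fun r => W (s, r)) = fun _ => (0:ℝ) := by
      intro s hst
      funext r
      rw [hWdef]
      exact indicator_of_notMem (fun hmem => hst ⟨lt_trans hmem.1 hmem.2.1, hmem.2.2⟩) _
    have hW0 : ∀ p, 0 ≤ W p := by
      intro p
      rcases (le_or_gt p.2 0) with h | h
      · by_cases hp : p ∈ T'
        · exact absurd hp.1 (not_lt.mpr h)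
        · rw [hWdef, indicator_of_notMem hp]
      · by_cases hp : p ∈ T'
        · rw [hWdef, indicator_of_mem hp]
          have h1 : (0:ℝ) ≤ (t - p.1) ^ (-d₁) := Real.rpow_nonneg (by linarith [hp.2.2]) _
          have h2 : (0:ℝ) ≤ (p.1 - p.2) ^ (-d₂) := Real.rpow_nonneg (by linarith [hp.2.1]) _
          have h3 : (0:ℝ) ≤ p.2 ^ (-dγ) := Real.rpow_nonneg h.le _
          positivity
        · rw [hWdef, indicator_of_notMem hp]
    -- W is integrable on the product
    have hWint : Integrable W (volume.prod volume) := by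
      refine (integrable_prod_iff hWm.aestronglyMeasurable).mpr ⟨?_, ?_⟩
      · filter_upwards with s
        by_cases hst : s ∈ Ioo (0:ℝ) t
        · rw [hWsec s hst]
          rw [integrable_indicator_iff measurableSet_Ioo]
          exact (aux_kernelIntegrable hd₂0 hd₂1 hdγ0 hdγ1 hst.1).const_mul _
        · rw [hWsec0 s hst]
          exact integrable_zero _ _ _
      · -- the function of s
        set e' : ℝ := max (d₂ + dγ - 1) 0 with he'def
        have he'0 : 0 ≤ e' := le_max_right _ _
        have he'1 : e' < 1 := max_lt (by linarith) one_pos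
        set c₁ : ℝ := t ^ (max (1 - d₂ - dγ) 0) with hc₁def
        have hc₁0 : 0 ≤ c₁ := Real.rpow_nonneg ht.le _
        set m2γ : ℝ := 1 / (1 - d₂) + 1 / (1 - dγ) with hm2γdef
        have hm2γ0 : 0 ≤ m2γ := by
          rw [hm2γdef]
          have : (0:ℝ) < 1 - d₂ := by linarith
          have : (0:ℝ) < 1 - dγ := by linarith
          positivity
        set Cs : ℝ := 2 ^ dγ * m2γ * c₁ with hCsdef
        have hCs0 : 0 ≤ Cs := by
          have : (0:ℝ) ≤ (2:ℝ) ^ dγ := (Real.rpow_pos_of_pos two_pos dγ).le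
          positivity
        apply Integrable.mono'
          (g := (Ioo (0:ℝ) t).indicator (fun s => Cs * ((t - s) ^ (-d₁) * s ^ (-e'))))
          ((integrable_indicator_iff measurableSet_Ioo).mpr
            ((aux_kernelIntegrable hd₁0 hd₁1 he'0 he'1 ht).const_mul _))
          (hWm.norm.aestronglyMeasurable.integral_prod_right')
        filter_upwards with s
        by_cases hst : s ∈ Ioo (0:ℝ) t
        · rw [indicator_of_mem hst]
          have hnn : ∀ r, ‖W (s, r)‖ = W (s, r) := fun r => Real.norm_of_nonneg (hW0 _)
          have hint1 : ∫ r, ‖W (s, r)‖ = ∫ r, W (s, r) := by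
            congr 1; funext r; exact hnn r
          have hint2 : ∫ r, W (s, r)
              = ∫ r in Ioo (0:ℝ) s, (t - s) ^ (-d₁) * ((s - r) ^ (-d₂) * r ^ (-dγ)) := by
            conv_lhs => rw [show (fun r => W (s, r)) = _ from hWsec s hst]
            exact integral_indicator measurableSet_Ioo
          have hkb : ∫ r in Ioo (0:ℝ) s, (s - r) ^ (-d₂) * r ^ (-dγ)
              ≤ (2 ^ dγ * s ^ (1 - d₂) * m2γ) * s ^ (-dγ) :=
            aux_kernel_int_le hd₂0 hd₂1 hdγ0 hdγ1 hst.1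
          have hsd : s ^ (1 - d₂) * s ^ (-dγ) ≤ c₁ * s ^ (-e') := by
            have hsum : s ^ (1 - d₂) * s ^ (-dγ) = s ^ (1 - d₂ - dγ) := by
              rw [← Real.rpow_add hst.1]; ring_nf
            rw [hsum]
            rcases le_or_gt (d₂ + dγ) 1 with hcase | hcase
            · have h1 : e' = 0 := max_eq_right (by linarith)
              have h2 : c₁ = t ^ (1 - d₂ - dγ) := by
                rw [hc₁def, max_eq_left (by linarith)]
              rw [h1, h2, neg_zero, Real.rpow_zero, mul_one]
              exact Real.rpow_le_rpow hst.1.le hst.2.le (by linarith)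
            · have h1 : e' = d₂ + dγ - 1 := max_eq_left (by linarith)
              have h2 : c₁ = 1 := by
                rw [hc₁def, max_eq_right (by linarith), Real.rpow_zero]
              rw [h1, h2, one_mul]
              have : -(d₂ + dγ - 1) = 1 - d₂ - dγ := by ring
              rw [this]
          have hd₁nn : (0:ℝ) ≤ (t - s) ^ (-d₁) := Real.rpow_nonneg (by linarith [hst.2]) _
          have h2dγ : (0:ℝ) ≤ (2:ℝ) ^ dγ := (Real.rpow_pos_of_pos two_pos dγ).le
          rw [Real.norm_of_nonneg (by rw [hint1]; exact integral_nonneg (fun r => hW0 _))]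
          rw [hint1, hint2, integral_const_mul]
          calc (t - s) ^ (-d₁) * ∫ r in Ioo (0:ℝ) s, (s - r) ^ (-d₂) * r ^ (-dγ)
              ≤ (t - s) ^ (-d₁) * ((2 ^ dγ * s ^ (1 - d₂) * m2γ) * s ^ (-dγ)) :=
                mul_le_mul_of_nonneg_left hkb hd₁nn
            _ = (2 ^ dγ * m2γ) * ((t - s) ^ (-d₁) * (s ^ (1 - d₂) * s ^ (-dγ))) := by ring
            _ ≤ (2 ^ dγ * m2γ) * ((t - s) ^ (-d₁) * (c₁ * s ^ (-e'))) := by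
                apply mul_le_mul_of_nonneg_left ?_ (by positivity)
                exact mul_le_mul_of_nonneg_left hsd hd₁nn
            _ = Cs * ((t - s) ^ (-d₁) * s ^ (-e')) := by rw [hCsdef]; ring
        · rw [indicator_of_notMem hst]
          have : (fun r => ‖W (s, r)‖) = fun _ => (0:ℝ) := by
            funext r
            rw [congrFun (hWsec0 s hst) r]
            simp
          rw [this]
          simp
    -- a.e. strong measurability of H on the triangle
    have hHmeas : AEStronglyMeasurable (fun p : ℝ × ℝ => H p.1 p.2)
        ((volume.prod volume).restrict T') := by
      obtain ⟨v', hv'm, hvv'⟩ := hvmeas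
      have hae : ∀ᵐ r ∂(volume : Measure ℝ), r ∈ Ioi (0:ℝ) → v r = v' r :=
        (ae_restrict_iff' measurableSet_Ioi).mp hvv'
      -- transfer to the product measure
      have haeprod : ∀ᵐ p ∂((volume.prod volume).restrict T'), v p.2 = v' p.2 := by
        set B : Set ℝ := {r : ℝ | ¬ (r ∈ Ioi (0:ℝ) → v r = v' r)} with hBdef
        have hB : (volume : Measure ℝ) B = 0 := hae
        have hBprod : (volume.prod volume) {p : ℝ × ℝ | ¬ (p.2 ∈ Ioi (0:ℝ) → v p.2 = v' p.2)} = 0 := by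
          have hsub : {p : ℝ × ℝ | ¬ (p.2 ∈ Ioi (0:ℝ) → v p.2 = v' p.2)}
              ⊆ (univ : Set ℝ) ×ˢ (toMeasurable volume B) :=
            fun p hp => ⟨mem_univ _, subset_toMeasurable _ _ hp⟩
          refine measure_mono_null hsub ?_
          rw [Measure.prod_prod, measure_toMeasurable, hB, mul_zero]
        have h1 : ∀ᵐ p ∂(volume.prod volume), p.2 ∈ Ioi (0:ℝ) → v p.2 = v' p.2 := hBprod
        have h2 : ∀ᵐ p ∂((volume.prod volume).restrict T'),
            p.2 ∈ Ioi (0:ℝ) → v p.2 = v' p.2 := ae_restrict_of_ae h1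
        have h3 : ∀ᵐ p ∂((volume.prod volume).restrict T'), p ∈ T' :=
          ae_restrict_mem hT'meas
        filter_upwards [h2, h3] with p hp1 hp2
        exact hp1 hp2.1
      have hv'sm : AEStronglyMeasurable (fun p : ℝ × ℝ => P₂ (v' p.2))
          ((volume.prod volume).restrict T') :=
        (P₂.continuous.comp_stronglyMeasurable
          (hv'm.comp_measurable measurable_snd)).aestronglyMeasurable.restrict
      have hinner' : AEStronglyMeasurable
          (fun p : ℝ × ℝ => (SP₂α (p.1 - p.2)) (P₂ (v' p.2)))
          ((volume.prod volume).restrict T') := by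
        apply aux_aesm_apply SP₂α hSP₂cont (volume.prod volume) T' hT'meas
          (fun p => p.1 - p.2) (continuous_fst.sub continuous_snd) ?_ _ hv'sm
        intro p hp
        exact sub_pos.mpr hp.2.1
      have houter : AEStronglyMeasurable
          (fun p : ℝ × ℝ => (S₁ (t - p.1)) (P₁ ((SP₂α (p.1 - p.2)) (P₂ (v' p.2)))))
          ((volume.prod volume).restrict T') := by
        apply aux_aesm_apply S₁ hS₁cont (volume.prod volume) T' hT'meas
          (fun p => t - p.1) (continuous_const.sub continuous_fst) ?_ _
          (P₁.continuous.comp_aestronglyMeasurable hinner')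
        intro p hp
        exact sub_pos.mpr hp.2.2
      apply houter.congr
      filter_upwards [haeprod] with p hp
      rw [hHdef]
      simp only
      rw [hp]
    -- integrability of H over the triangle
    have hGint : IntegrableOn (fun p : ℝ × ℝ => H p.1 p.2) T' (volume.prod volume) := by
      set Cb : ℝ := Mc * (‖P₁‖ * (Mc * (‖P₂‖ * Kv))) with hCbdef
      apply Integrable.mono' (g := fun p => Cb * W p)
        ((hWint.const_mul Cb).integrableOn) hHmeas
      rw [ae_restrict_iff' hT'meas]
      filter_upwards with p hp
      have hpT : p ∈ T' := hp
      obtain ⟨hp1, hp2, hp3⟩ := hp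
      have hp2' : 0 < p.1 - p.2 := sub_pos.mpr hp2
      have ht1 : 0 < t - p.1 := sub_pos.mpr hp3
      have hp10 : 0 < p.1 := lt_trans hp1 hp2
      have hWp : W p = (t - p.1) ^ (-d₁) * ((p.1 - p.2) ^ (-d₂) * p.2 ^ (-dγ)) := by
        rw [hWdef]; exact indicator_of_mem hpT _
      have hb1 : ‖P₂ (v p.2)‖ ≤ ‖P₂‖ * (Kv * p.2 ^ (-dγ)) :=
        aux_opnorm_chain P₂ le_rfl (hKv' p.2 hp1 (by linarith))
      have hb2 : ‖(SP₂α (p.1 - p.2)) (P₂ (v p.2))‖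
          ≤ (Mc * (p.1 - p.2) ^ (-d₂)) * (‖P₂‖ * (Kv * p.2 ^ (-dγ))) :=
        aux_opnorm_chain _ (hMP2 _ hp2' (by linarith)) hb1
      have hb3 : ‖P₁ ((SP₂α (p.1 - p.2)) (P₂ (v p.2)))‖
          ≤ ‖P₁‖ * ((Mc * (p.1 - p.2) ^ (-d₂)) * (‖P₂‖ * (Kv * p.2 ^ (-dγ)))) :=
        aux_opnorm_chain P₁ le_rfl hb2
      have hb4 : ‖(S₁ (t - p.1)) (P₁ ((SP₂α (p.1 - p.2)) (P₂ (v p.2))))‖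
          ≤ (Mc * (t - p.1) ^ (-d₁))
            * (‖P₁‖ * ((Mc * (p.1 - p.2) ^ (-d₂)) * (‖P₂‖ * (Kv * p.2 ^ (-dγ))))) :=
        aux_opnorm_chain _ (hM1 _ ht1 (by linarith)) hb3
      calc ‖H p.1 p.2‖
          ≤ (Mc * (t - p.1) ^ (-d₁))
            * (‖P₁‖ * ((Mc * (p.1 - p.2) ^ (-d₂)) * (‖P₂‖ * (Kv * p.2 ^ (-dγ))))) := hb4
        _ = Cb * ((t - p.1) ^ (-d₁) * ((p.1 - p.2) ^ (-d₂) * p.2 ^ (-dγ))) := by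
            rw [hCbdef]; ring
        _ = Cb * W p := by rw [hWp]
    have hFint : Integrable F (volume.prod volume) :=
      (integrable_indicator_iff hT'meas).mpr hGint
    -- Fubini
    have hswap : ∫ s, ∫ r, F (s, r) = ∫ r, ∫ s, F (s, r) := by
      exact integral_integral_swap (f := fun s r => F (s, r)) hFint
    have hclaim1 : ∫ s in Ioo (0:ℝ) t, (∫ r in Ioo (0:ℝ) s, H s r)
        = ∫ s, ∫ r, F (s, r) := by
      rw [← integral_indicator measurableSet_Ioo]
      congr 1
      funext s
      by_cases hst : s ∈ Ioo (0:ℝ) t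
      · rw [indicator_of_mem hst, ← integral_indicator measurableSet_Ioo]
        congr 1
        funext r
        rw [hFdef]
        by_cases hr : r ∈ Ioo (0:ℝ) s
        · rw [indicator_of_mem hr,
            indicator_of_mem (show (s, r) ∈ T' from ⟨hr.1, hr.2, hst.2⟩)]
        · rw [indicator_of_notMem hr,
            indicator_of_notMem (show (s, r) ∉ T' from fun hmem => hr ⟨hmem.1, hmem.2.1⟩)]
      · rw [indicator_of_notMem hst]
        have : (fun r => F (s, r)) = fun _ => (0:Xα) := by
          funext r
          rw [hFdef]
          exact indicator_of_notMem
            (fun hmem => hst ⟨lt_trans hmem.1 hmem.2.1, hmem.2.2⟩) _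
        rw [this, integral_zero]
    have hclaim2 : ∫ r, ∫ s, F (s, r)
        = ∫ r in Ioo (0:ℝ) t, (∫ s in Ioo r t, H s r) := by
      rw [← integral_indicator measurableSet_Ioo]
      congr 1
      funext r
      by_cases hrt : r ∈ Ioo (0:ℝ) t
      · rw [indicator_of_mem hrt, ← integral_indicator measurableSet_Ioo]
        congr 1
        funext s
        rw [hFdef]
        by_cases hs : s ∈ Ioo r t
        · rw [indicator_of_mem hs,
            indicator_of_mem (show (s, r) ∈ T' from ⟨hrt.1, hs.1, hs.2⟩)]
        · rw [indicator_of_notMem hs,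
            indicator_of_notMem (show (s, r) ∉ T' from fun hmem => hs ⟨hmem.2.1, hmem.2.2⟩)]
      · rw [indicator_of_notMem hrt]
        have : (fun s => F (s, r)) = fun _ => (0:Xα) := by
          funext s
          rw [hFdef]
          exact indicator_of_notMem
            (fun hmem => hrt ⟨hmem.1, lt_trans hmem.2.1 hmem.2.2⟩) _
        rw [this, integral_zero]
    -- evaluation of the inner integral by Duhamel for SP₂α
    have hchange : ∀ r ∈ Ioo (0:ℝ) t, (∫ s in Ioo r t, H s r)
        = (SP₂α (t - r)) (P₂ (v r)) - (S₂ (t - r)) (P₂ (v r)) := by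
      intro r hr
      have hrt : 0 < t - r := sub_pos.mpr hr.2
      set y : Xβ₂ := P₂ (v r) with hydef
      have h1 : (∫ s in Ioo r t, H s r)
          = ∫ s in r..t, (S₁ (t - s)) (P₁ ((SP₂α (s - r)) y)) := by
        rw [intervalIntegral.integral_of_le hr.2.le, integral_Ioc_eq_integral_Ioo]
      have hfun : ∀ x : ℝ, (S₁ (t - x)) (P₁ ((SP₂α (x - r)) y))
          = (S₁ ((t - r) - (x - r))) (P₁ ((SP₂α (x - r)) y)) := by
        intro x
        have : (t - r) - (x - r) = t - x := by ring
        rw [this]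
      have h2 : ∫ s in r..t, (S₁ (t - s)) (P₁ ((SP₂α (s - r)) y))
          = ∫ σ in (0:ℝ)..(t - r), (S₁ ((t - r) - σ)) (P₁ ((SP₂α σ) y)) := by
        have := intervalIntegral.integral_comp_sub_right
          (a := r) (b := t) (fun σ => (S₁ ((t - r) - σ)) (P₁ ((SP₂α σ) y))) r
        rw [sub_self] at this
        rw [← this]
        congr 1
        funext x
        exact hfun x
      have h3 : ∫ σ in (0:ℝ)..(t - r), (S₁ ((t - r) - σ)) (P₁ ((SP₂α σ) y))
          = ∫ σ in Ioo (0:ℝ) (t - r), (S₁ ((t - r) - σ)) (P₁ ((SP₂α σ) y)) := by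
        rw [intervalIntegral.integral_of_le hrt.le, integral_Ioc_eq_integral_Ioo]
      rw [h1, h2, h3, eq_sub_iff_add_eq, add_comm]
      exact (hDuh₂ y (t - r) hrt).symm
    -- put everything together
    have hbig : (∫ s in Ioo (0:ℝ) t, (S₁ (t - s)) (P₁ (v s)))
        - (∫ s in Ioo (0:ℝ) t, (S₁ (t - s)) (P₁ ((SPγα s) u₀)))
        = (∫ r in Ioo (0:ℝ) t, (SP₂α (t - r)) (P₂ (v r)))
          - (∫ r in Ioo (0:ℝ) t, (S₂ (t - r)) (P₂ (v r))) := by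
      rw [← integral_sub (hIntB t ht htT) (hIntG t ht htT)]
      calc ∫ s in Ioo (0:ℝ) t,
              ((S₁ (t - s)) (P₁ (v s)) - (S₁ (t - s)) (P₁ ((SPγα s) u₀)))
          = ∫ s in Ioo (0:ℝ) t, (∫ r in Ioo (0:ℝ) s, H s r) :=
            setIntegral_congr_fun measurableSet_Ioo (fun s hs => hinner s hs)
        _ = ∫ s, ∫ r, F (s, r) := hclaim1
        _ = ∫ r, ∫ s, F (s, r) := hswap
        _ = ∫ r in Ioo (0:ℝ) t, (∫ s in Ioo r t, H s r) := hclaim2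
        _ = ∫ r in Ioo (0:ℝ) t,
              ((SP₂α (t - r)) (P₂ (v r)) - (S₂ (t - r)) (P₂ (v r))) :=
            setIntegral_congr_fun measurableSet_Ioo (fun r hr => hchange r hr)
        _ = _ := integral_sub (hIntE t ht htT) (hIntD t ht htT)
    have h := sub_eq_sub_iff_add_eq_add.mp hbig
    rw [hv t ht, hDuh₁ u₀ t ht]
    have hgoal : (∫ s in Ioo (0:ℝ) t, (S₁ (t - s)) (P₁ ((SPγα s) u₀)))
        + (∫ s in Ioo (0:ℝ) t, (SP₂α (t - s)) (P₂ (v s)))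
        = (∫ s in Ioo (0:ℝ) t, (S₁ (t - s)) (P₁ (v s)))
          + (∫ s in Ioo (0:ℝ) t, (S₂ (t - s)) (P₂ (v s))) := by
      have h2 : (∫ s in Ioo (0:ℝ) t, (S₁ (t - s)) (P₁ (v s)))
          + (∫ r in Ioo (0:ℝ) t, (S₂ (t - r)) (P₂ (v r)))
          = (∫ r in Ioo (0:ℝ) t, (SP₂α (t - r)) (P₂ (v r)))
            + (∫ s in Ioo (0:ℝ) t, (S₁ (t - s)) (P₁ ((SPγα s) u₀))) := h
      have h3 := h2.symm
      calc (∫ s in Ioo (0:ℝ) t, (S₁ (t - s)) (P₁ ((SPγα s) u₀)))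
          + (∫ s in Ioo (0:ℝ) t, (SP₂α (t - s)) (P₂ (v s)))
          = (∫ r in Ioo (0:ℝ) t, (SP₂α (t - r)) (P₂ (v r)))
            + (∫ s in Ioo (0:ℝ) t, (S₁ (t - s)) (P₁ ((SPγα s) u₀))) := by abel
        _ = (∫ s in Ioo (0:ℝ) t, (S₁ (t - s)) (P₁ (v s)))
            + (∫ r in Ioo (0:ℝ) t, (S₂ (t - r)) (P₂ (v r))) := h3
        _ = _ := by rfl
    rw [add_assoc, hgoal, ← add_assoc]
  -- Step 2 : Gronwall for the difference
  set C₁ : ℝ := Mc * ‖P₁‖ with hC₁def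
  set C₂ : ℝ := Mc * ‖P₂‖ with hC₂def
  have hC₁0 : 0 ≤ C₁ := mul_nonneg hMc0 (norm_nonneg _)
  have hC₂0 : 0 ≤ C₂ := mul_nonneg hMc0 (norm_nonneg _)
  have hwkey : ∀ t : ℝ, 0 < t → t ≤ t₀ →
      ‖u t - v t‖ ≤ C₁ * (∫ s in Ioo (0:ℝ) t, (t - s) ^ (-d₁) * ‖u s - v s‖)
        + C₂ * (∫ s in Ioo (0:ℝ) t, (t - s) ^ (-d₂) * ‖u s - v s‖) := by
    intro t ht htT
    have hIA := hIntA t ht htT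
    have hIB := hIntB t ht htT
    have hIC := hIntC t ht htT
    have hID := hIntD t ht htT
    have hsub : u t - v t
        = (∫ s in Ioo (0:ℝ) t, ((S₁ (t - s)) (P₁ (u s)) - (S₁ (t - s)) (P₁ (v s))))
        + (∫ s in Ioo (0:ℝ) t, ((S₂ (t - s)) (P₂ (u s)) - (S₂ (t - s)) (P₂ (v s)))) := by
      rw [hu t ht, hveq t ht htT, integral_sub hIA hIB, integral_sub hIC hID]
      abel
    -- the scalar integrands are integrable
    have hwnorm : ∀ s : ℝ, 0 < s → s ≤ t₀ → ‖u s - v s‖ ≤ (Ku + Kv) * s ^ (-dγ) := by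
      intro s h1 h2
      calc ‖u s - v s‖ ≤ ‖u s‖ + ‖v s‖ := norm_sub_le _ _
        _ ≤ Ku * s ^ (-dγ) + Kv * s ^ (-dγ) := add_le_add (hKu' s h1 h2) (hKv' s h1 h2)
        _ = (Ku + Kv) * s ^ (-dγ) := by ring
    have hscal : ∀ d' : ℝ, 0 ≤ d' → d' < 1 →
        IntegrableOn (fun s => (t - s) ^ (-d') * ‖u s - v s‖) (Ioo 0 t) := by
      intro d' h0 h1
      have hkm : AEStronglyMeasurable (fun s : ℝ => (t - s) ^ (-d'))
          (volume.restrict (Ioo 0 t)) := by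
        apply Measurable.aestronglyMeasurable; fun_prop
      apply Integrable.mono'
        (g := fun s => (Ku + Kv) * ((t - s) ^ (-d') * s ^ (-dγ)))
        ((aux_kernelIntegrable h0 h1 hdγ0 hdγ1 ht).const_mul _)
        (hkm.mul ((humeas' t).sub (hvmeas' t)).norm)
      rw [ae_restrict_iff' measurableSet_Ioo]
      filter_upwards with s hs
      have hker : (0:ℝ) ≤ (t - s) ^ (-d') := Real.rpow_nonneg (by linarith [hs.2]) _
      show ‖(t - s) ^ (-d') * ‖u s - v s‖‖ ≤ (Ku + Kv) * ((t - s) ^ (-d') * s ^ (-dγ))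
      rw [Real.norm_of_nonneg (mul_nonneg hker (norm_nonneg _))]
      calc (t - s) ^ (-d') * ‖u s - v s‖
          ≤ (t - s) ^ (-d') * ((Ku + Kv) * s ^ (-dγ)) :=
            mul_le_mul_of_nonneg_left (hwnorm s hs.1 (hs.2.le.trans htT)) hker
        _ = (Ku + Kv) * ((t - s) ^ (-d') * s ^ (-dγ)) := by ring
    have hb₁ : ‖∫ s in Ioo (0:ℝ) t, ((S₁ (t - s)) (P₁ (u s)) - (S₁ (t - s)) (P₁ (v s)))‖
        ≤ C₁ * (∫ s in Ioo (0:ℝ) t, (t - s) ^ (-d₁) * ‖u s - v s‖) := by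
      refine le_trans (norm_integral_le_integral_norm _) ?_
      rw [← integral_const_mul]
      apply setIntegral_mono_on ((hIA.sub hIB).norm) ?_ measurableSet_Ioo ?_
      · exact (hscal d₁ hd₁0 hd₁1).const_mul _
      · intro s hs
        have h1 : 0 < t - s := by linarith [hs.2]
        calc ‖(S₁ (t - s)) (P₁ (u s)) - (S₁ (t - s)) (P₁ (v s))‖
            = ‖(S₁ (t - s)) (P₁ (u s - v s))‖ := by rw [map_sub, map_sub]
          _ ≤ (Mc * (t - s) ^ (-d₁)) * (‖P₁‖ * ‖u s - v s‖) :=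
              aux_opnorm_chain _ (hM1 _ h1 (by linarith [hs.1]))
                (aux_opnorm_chain P₁ le_rfl le_rfl)
          _ = C₁ * ((t - s) ^ (-d₁) * ‖u s - v s‖) := by rw [hC₁def]; ring
    have hb₂ : ‖∫ s in Ioo (0:ℝ) t, ((S₂ (t - s)) (P₂ (u s)) - (S₂ (t - s)) (P₂ (v s)))‖
        ≤ C₂ * (∫ s in Ioo (0:ℝ) t, (t - s) ^ (-d₂) * ‖u s - v s‖) := by
      refine le_trans (norm_integral_le_integral_norm _) ?_
      rw [← integral_const_mul]
      apply setIntegral_mono_on ((hIC.sub hID).norm) ?_ measurableSet_Ioo ?_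
      · exact (hscal d₂ hd₂0 hd₂1).const_mul _
      · intro s hs
        have h1 : 0 < t - s := by linarith [hs.2]
        calc ‖(S₂ (t - s)) (P₂ (u s)) - (S₂ (t - s)) (P₂ (v s))‖
            = ‖(S₂ (t - s)) (P₂ (u s - v s))‖ := by rw [map_sub, map_sub]
          _ ≤ (Mc * (t - s) ^ (-d₂)) * (‖P₂‖ * ‖u s - v s‖) :=
              aux_opnorm_chain _ (hM2 _ h1 (by linarith [hs.1]))
                (aux_opnorm_chain P₂ le_rfl le_rfl)
          _ = C₂ * ((t - s) ^ (-d₂) * ‖u s - v s‖) := by rw [hC₂def]; ring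
    calc ‖u t - v t‖
        ≤ ‖∫ s in Ioo (0:ℝ) t, ((S₁ (t - s)) (P₁ (u s)) - (S₁ (t - s)) (P₁ (v s)))‖
          + ‖∫ s in Ioo (0:ℝ) t, ((S₂ (t - s)) (P₂ (u s)) - (S₂ (t - s)) (P₂ (v s)))‖ := by
          rw [hsub]; exact norm_add_le _ _
      _ ≤ C₁ * (∫ s in Ioo (0:ℝ) t, (t - s) ^ (-d₁) * ‖u s - v s‖)
          + C₂ * (∫ s in Ioo (0:ℝ) t, (t - s) ^ (-d₂) * ‖u s - v s‖) := add_le_add hb₁ hb₂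
  have hzero := aux_gronwall (fun s => ‖u s - v s‖) t₀ (Ku + Kv) C₁ C₂ dγ d₁ d₂
    ht₀ hC₁0 hC₂0 hdγ0 hdγ1 hd₁0 hd₁1 hd₂0 hd₂1
    ((humeas.sub hvmeas).norm)
    (fun s => norm_nonneg _)
    (fun s h1 h2 => by
      calc ‖u s - v s‖ ≤ ‖u s‖ + ‖v s‖ := norm_sub_le _ _
        _ ≤ Ku * s ^ (-dγ) + Kv * s ^ (-dγ) := add_le_add (hKu' s h1 h2) (hKv' s h1 h2)
        _ = (Ku + Kv) * s ^ (-dγ) := by ring)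
    hwkey t₀ ht₀ le_rfl
  have : u t₀ - v t₀ = 0 := norm_eq_zero.mp hzero
  exact sub_eq_zero.mp this
end

section
/- (Resolvent identity relating the Laplace transforms of the perturbed and unperturbed evolutions.) Let u₀ ∈ X_α and let u : (0,∞) → X_α be continuous with ‖u(t)‖ ≤ K e^{a t} for all t > 0 and some K ≥ 0, satisfying u(t) = S_{αα}(t)u₀ + Σ_{i=1}^n ∫_0^t S_i(t−s) P_i u(s) ds for all t > 0. Then for every λ ∈ ℂ with Re λ < −a, all the Laplace-transform integrals below converge absolutely as Bochner integrals and ∫_0^∞ e^{λ t} u(t) dt = ∫_0^∞ e^{λ t} S_{αα}(t) u₀ dt + Σ_{i=1}^n G_i(λ) ( P_i ( ∫_0^∞ e^{λ s} u(s) ds ) ), where G_i(λ) y := ∫_0^∞ e^{λ τ} S_i(τ) y dτ for y ∈ X_{β_i}. -/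
open MeasureTheory Set


lemma aux_int {c d : ℝ} (hc : c < 0) (hd0 : 0 ≤ d) (hd1 : d < 1) :
    IntegrableOn (fun t : ℝ => Real.exp (c * t) * t ^ (-d)) (Ioi (0:ℝ)) := by
  have hb : 0 < -c := by linarith
  have h1 : IntegrableOn (fun x : ℝ => Real.exp (-x) * x ^ ((1 - d) - 1)) (Ioi (0:ℝ)) :=
    Real.GammaIntegral_convergent (by linarith)
  have h2 := (integrableOn_Ioi_comp_mul_left_iff
      (fun x : ℝ => Real.exp (-x) * x ^ ((1 - d) - 1)) 0 hb).2 (by simpa using h1)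
  have h3 := h2.const_mul ((-c) ^ d)
  refine IntegrableOn.congr_fun h3 (fun t ht => ?_) measurableSet_Ioi
  have ht0 : (0:ℝ) < t := ht
  have : ((-c) * t) ^ ((1 - d) - 1) = (-c) ^ (-d) * t ^ (-d) := by
    rw [show (1 - d) - 1 = -d by ring, Real.mul_rpow hb.le ht0.le]
  rw [this]
  have hcc : (-c) ^ d * (-c) ^ (-d) = 1 := by
    rw [← Real.rpow_add hb, add_neg_cancel, Real.rpow_zero]
  have : Real.exp (-((-c) * t)) = Real.exp (c * t) := by ring_nf
  rw [this]
  linear_combination (Real.exp (c * t) * t ^ (-d)) * hcc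

lemma aux_norm_exp (lam : ℂ) (t : ℝ) : ‖Complex.exp (lam * t)‖ = Real.exp (lam.re * t) := by
  rw [Complex.norm_exp]
  norm_num [Complex.mul_re]

lemma aux_mono {E : Type*} [NormedAddCommGroup E] {f : ℝ → E}
    (hm : AEStronglyMeasurable f (volume.restrict (Ioi (0:ℝ))))
    {C c d : ℝ} (hc : c < 0) (hd0 : 0 ≤ d) (hd1 : d < 1)
    (hbd : ∀ t > (0:ℝ), ‖f t‖ ≤ C * (Real.exp (c * t) * t ^ (-d))) :
    IntegrableOn f (Ioi (0:ℝ)) := by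
  refine Integrable.mono' ((aux_int hc hd0 hd1).const_mul C) hm ?_
  filter_upwards [ae_restrict_mem measurableSet_Ioi] with t ht
  exact hbd t ht

lemma aux_jointCont {X Y : Type*} [NormedAddCommGroup X] [NormedSpace ℂ X]
    [NormedAddCommGroup Y] [NormedSpace ℂ Y]
    (S : ℝ → X →L[ℂ] Y) (hc : ∀ y, ContinuousOn (fun t => S t y) (Ioi (0:ℝ)))
    {B : ℝ → ℝ} (hB : ContinuousOn B (Ioi (0:ℝ))) (hbd : ∀ t > (0:ℝ), ‖S t‖ ≤ B t) :
    ContinuousOn (fun p : ℝ × X => S p.1 p.2) ((Ioi (0:ℝ)) ×ˢ (univ : Set X)) := by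
  rintro ⟨t₀, y₀⟩ ⟨ht₀, -⟩
  have h1 : ContinuousWithinAt (fun p : ℝ × X => S p.1 y₀)
      ((Ioi (0:ℝ)) ×ˢ (univ : Set X)) (t₀, y₀) := by
    refine ContinuousWithinAt.comp (x := (t₀, y₀)) (hc y₀ t₀ ht₀) continuousWithinAt_fst ?_
    exact fun p hp => hp.1
  have h2 : Filter.Tendsto (fun p : ℝ × X => S p.1 (p.2 - y₀))
      (nhdsWithin (t₀, y₀) ((Ioi (0:ℝ)) ×ˢ (univ : Set X))) (nhds 0) := by
    have hBt : Filter.Tendsto (fun p : ℝ × X => B p.1 * ‖p.2 - y₀‖)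
        (nhdsWithin (t₀, y₀) ((Ioi (0:ℝ)) ×ˢ (univ : Set X))) (nhds (B t₀ * ‖y₀ - y₀‖)) := by
      apply Filter.Tendsto.mul
      · exact (hB t₀ ht₀).comp continuousWithinAt_fst (fun p hp => hp.1)
      · exact ((continuous_norm.comp (continuous_snd.sub continuous_const)).continuousAt).continuousWithinAt
    rw [sub_self, norm_zero, mul_zero] at hBt
    refine squeeze_zero_norm' ?_ hBt
    filter_upwards [self_mem_nhdsWithin] with p hp
    calc ‖S p.1 (p.2 - y₀)‖ ≤ ‖S p.1‖ * ‖p.2 - y₀‖ := (S p.1).le_opNorm _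
      _ ≤ B p.1 * ‖p.2 - y₀‖ := by
          exact mul_le_mul_of_nonneg_right (hbd p.1 hp.1) (norm_nonneg _)
  have key : Filter.Tendsto (fun p : ℝ × X => S p.1 (p.2 - y₀) + S p.1 y₀)
      (nhdsWithin (t₀, y₀) ((Ioi (0:ℝ)) ×ˢ (univ : Set X))) (nhds (S t₀ y₀)) := by
    simpa using h2.add h1
  exact key.congr (fun p => by simp [map_sub])

/-- Resolvent identity relating the Laplace transforms of the perturbed and
unperturbed evolutions: if `u` is continuous with `‖u(t)‖ ≤ K e^{at}` and
satisfies `u(t) = S_{αα}(t)u₀ + Σ_i ∫_0^t S_i(t-s) P_i u(s) ds`, then for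
`Re λ < -a` all Laplace-transform integrals converge absolutely and
`∫_0^∞ e^{λt}u(t)dt = ∫_0^∞ e^{λt}S_{αα}(t)u₀ dt + Σ_i G_i(λ)(P_i ∫_0^∞ e^{λs}u(s)ds)`,
where `G_i(λ)y = ∫_0^∞ e^{λτ} S_i(τ)y dτ`. -/
theorem laplace_transform_resolvent_identity
    {n : ℕ} (hn : 0 < n)
    {Xα : Type*} [NormedAddCommGroup Xα] [NormedSpace ℂ Xα] [CompleteSpace Xα]
    {Xβ : Fin n → Type*} [∀ i, NormedAddCommGroup (Xβ i)]
    [∀ i, NormedSpace ℂ (Xβ i)] [∀ i, CompleteSpace (Xβ i)]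
    (Sαα : ℝ → Xα →L[ℂ] Xα)
    (S : (i : Fin n) → ℝ → (Xβ i →L[ℂ] Xα))
    (hSααcont : ∀ x : Xα, ContinuousOn (fun t => (Sαα t) x) (Ioi 0))
    (hSicont : ∀ i (y : Xβ i), ContinuousOn (fun t => (S i t) y) (Ioi 0))
    (a M : ℝ) (hM : 0 ≤ M) (d : Fin n → ℝ) (hd0 : ∀ i, 0 ≤ d i) (hd1 : ∀ i, d i < 1)
    (hSααbd : ∀ t > (0:ℝ), ‖Sαα t‖ ≤ M * Real.exp (a * t))
    (hSibd : ∀ i, ∀ t > (0:ℝ), ‖S i t‖ ≤ M * Real.exp (a * t) * t ^ (-(d i)))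
    (P : (i : Fin n) → Xα →L[ℂ] Xβ i)
    (u₀ : Xα) (u : ℝ → Xα)
    (hucont : ContinuousOn u (Ioi 0))
    (K : ℝ) (hK : 0 ≤ K)
    (hubd : ∀ t > (0:ℝ), ‖u t‖ ≤ K * Real.exp (a * t))
    (hu : ∀ t > (0:ℝ), u t = (Sαα t) u₀ +
        ∑ i, ∫ s in Ioo (0:ℝ) t, (S i (t - s)) ((P i) (u s))) :
    ∀ lam : ℂ, lam.re < -a →
      IntegrableOn (fun t : ℝ => Complex.exp (lam * t) • u t) (Ioi 0) ∧
      IntegrableOn (fun t : ℝ => Complex.exp (lam * t) • (Sαα t) u₀) (Ioi 0) ∧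
      (∀ i (y : Xβ i),
        IntegrableOn (fun τ : ℝ => Complex.exp (lam * τ) • (S i τ) y) (Ioi 0)) ∧
      (∫ t in Ioi (0:ℝ), Complex.exp (lam * t) • u t) =
        (∫ t in Ioi (0:ℝ), Complex.exp (lam * t) • (Sαα t) u₀) +
          ∑ i, ∫ τ in Ioi (0:ℝ), Complex.exp (lam * τ) •
            (S i τ) ((P i) (∫ s in Ioi (0:ℝ), Complex.exp (lam * s) • u s)) := by
  intro lam hlam
  have hc0 : lam.re + a < 0 := by linarith
  have hexpc : Continuous fun t : ℝ => Complex.exp (lam * t) :=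
    Complex.continuous_exp.comp (continuous_const.mul Complex.continuous_ofReal)
  -- integrability of e^{λt} • u t
  have hI1 : IntegrableOn (fun t : ℝ => Complex.exp (lam * t) • u t) (Ioi 0) := by
    refine aux_mono (C := K) ((hexpc.continuousOn.smul hucont).aestronglyMeasurable measurableSet_Ioi)
      hc0 le_rfl zero_lt_one (fun t ht => ?_)
    rw [norm_smul, aux_norm_exp]
    simp only [neg_zero, Real.rpow_zero, mul_one]
    calc Real.exp (lam.re * t) * ‖u t‖ ≤ Real.exp (lam.re * t) * (K * Real.exp (a * t)) := by
          gcongr; exact hubd t ht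
      _ = K * Real.exp ((lam.re + a) * t) := by rw [add_mul, Real.exp_add]; ring
  have hI2 : IntegrableOn (fun t : ℝ => Complex.exp (lam * t) • (Sαα t) u₀) (Ioi 0) := by
    refine aux_mono (C := M * ‖u₀‖) ((hexpc.continuousOn.smul (hSααcont u₀)).aestronglyMeasurable
      measurableSet_Ioi) hc0 le_rfl zero_lt_one (fun t ht => ?_)
    rw [norm_smul, aux_norm_exp]
    simp only [neg_zero, Real.rpow_zero, mul_one]
    calc Real.exp (lam.re * t) * ‖(Sαα t) u₀‖
        ≤ Real.exp (lam.re * t) * ((M * Real.exp (a * t)) * ‖u₀‖) := by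
          gcongr
          exact ((Sαα t).le_opNorm u₀).trans
            (mul_le_mul_of_nonneg_right (hSααbd t ht) (norm_nonneg _))
      _ = (M * ‖u₀‖) * Real.exp ((lam.re + a) * t) := by rw [add_mul, Real.exp_add]; ring
  have hI3 : ∀ i (y : Xβ i),
      IntegrableOn (fun τ : ℝ => Complex.exp (lam * τ) • (S i τ) y) (Ioi 0) := by
    intro i y
    refine aux_mono (C := M * ‖y‖) ((hexpc.continuousOn.smul (hSicont i y)).aestronglyMeasurable
      measurableSet_Ioi) hc0 (hd0 i) (hd1 i) (fun t ht => ?_)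
    rw [norm_smul, aux_norm_exp]
    calc Real.exp (lam.re * t) * ‖(S i t) y‖
        ≤ Real.exp (lam.re * t) * ((M * Real.exp (a * t) * t ^ (-(d i))) * ‖y‖) := by
          gcongr
          exact ((S i t).le_opNorm y).trans
            (mul_le_mul_of_nonneg_right (hSibd i t ht) (norm_nonneg _))
      _ = (M * ‖y‖) * (Real.exp ((lam.re + a) * t) * t ^ (-(d i))) := by
          rw [add_mul, Real.exp_add]; ring
  refine ⟨hI1, hI2, hI3, ?_⟩
  have key : ∀ i : Fin n,
      IntegrableOn (fun t : ℝ => Complex.exp (lam * t) •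
        ∫ s in Ioo (0:ℝ) t, (S i (t - s)) ((P i) (u s))) (Ioi 0) ∧
      (∫ t in Ioi (0:ℝ), Complex.exp (lam * t) •
          ∫ s in Ioo (0:ℝ) t, (S i (t - s)) ((P i) (u s))) =
        ∫ τ in Ioi (0:ℝ), Complex.exp (lam * τ) •
          (S i τ) ((P i) (∫ s in Ioi (0:ℝ), Complex.exp (lam * s) • u s)) := by
    intro i
    have hdi0 := hd0 i
    have hdi1 := hd1 i
    set v : ℝ → Xβ i := fun s => (P i) (u s) with hv
    have hvcont : ContinuousOn v (Ioi 0) := (P i).continuous.comp_continuousOn hucont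
    have hvbd : ∀ s > (0:ℝ), ‖v s‖ ≤ (‖P i‖ * K) * Real.exp (a * s) := by
      intro s hs
      calc ‖v s‖ ≤ ‖P i‖ * ‖u s‖ := (P i).le_opNorm _
        _ ≤ ‖P i‖ * (K * Real.exp (a * s)) := by gcongr; exact hubd s hs
        _ = (‖P i‖ * K) * Real.exp (a * s) := by ring
    set T : Set (ℝ × ℝ) := {p | 0 < p.1 ∧ p.1 < p.2} with hT
    have hTopen : IsOpen T := by
      have hTeq : T = {p : ℝ × ℝ | 0 < p.1} ∩ {p : ℝ × ℝ | p.1 < p.2} := rfl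
      rw [hTeq]
      exact (isOpen_lt continuous_const continuous_fst).inter
        (isOpen_lt continuous_fst continuous_snd)
    set g : ℝ × ℝ → Xα := fun p => Complex.exp (lam * p.2) • (S i (p.2 - p.1)) (v p.1)
      with hgdef
    have hgcont : ContinuousOn g T := by
      have hB : ContinuousOn (fun t : ℝ => M * Real.exp (a * t) * t ^ (-(d i))) (Ioi 0) := by
        refine ContinuousOn.mul ?_ ?_
        · exact (continuous_const.mul
            (Real.continuous_exp.comp (continuous_const.mul continuous_id))).continuousOn
        · exact continuousOn_id.rpow_const fun t ht => Or.inl (ne_of_gt ht)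
      have hj := aux_jointCont (S i) (hSicont i) hB (hSibd i)
      have h1 : ContinuousOn (fun p : ℝ × ℝ => ((p.2 - p.1 : ℝ), v p.1)) T := by
        refine ContinuousOn.prodMk ((continuous_snd.sub continuous_fst).continuousOn) ?_
        exact hvcont.comp continuous_fst.continuousOn fun p hp => hp.1
      refine ContinuousOn.smul ((hexpc.comp continuous_snd).continuousOn) ?_
      exact hj.comp h1 fun p hp => ⟨sub_pos.2 hp.2, mem_univ _⟩
    have hgm : AEStronglyMeasurable (T.indicator g) (volume : Measure (ℝ × ℝ)) :=
      (aestronglyMeasurable_indicator_iff hTopen.measurableSet).2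
        (hgcont.aestronglyMeasurable hTopen.measurableSet)
    have hgm' : AEStronglyMeasurable (T.indicator g)
        ((volume : Measure ℝ).prod (volume : Measure ℝ)) := by
      rwa [← Measure.volume_eq_prod]
    have hfix : ∀ s > (0:ℝ), ∀ t : ℝ, T.indicator g (s, t) =
        (Ioi (0:ℝ)).indicator
          (fun τ : ℝ => Complex.exp (lam * s) • (Complex.exp (lam * τ) • (S i τ) (v s)))
          (t - s) := by
      intro s hs t
      by_cases h : s < t
      · rw [indicator_of_mem (show (s, t) ∈ T from ⟨hs, h⟩),
          indicator_of_mem (show t - s ∈ Ioi (0:ℝ) from sub_pos.2 h)]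
        rw [hgdef]
        simp only
        rw [smul_smul, ← Complex.exp_add]
        congr 2
        push_cast
        ring
      · rw [indicator_of_notMem (show (s, t) ∉ T from fun hmem => h hmem.2),
          indicator_of_notMem (show t - s ∉ Ioi (0:ℝ) from fun hmem =>
            h (by have := mem_Ioi.1 hmem; linarith))]
    have hfix0 : ∀ s ≤ (0:ℝ), ∀ t : ℝ, T.indicator g (s, t) = (0 : Xα) := by
      intro s hs t
      exact indicator_of_notMem (fun hmem => absurd hmem.1 (not_lt.2 hs)) _
    have hslice : ∀ s : ℝ, Integrable (fun t => T.indicator g (s, t)) volume := by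
      intro s
      rcases le_or_gt s 0 with hs | hs
      · simp only [hfix0 s hs]
        exact integrable_zero _ _ _
      · simp only [hfix s hs]
        have hFin : IntegrableOn
            (fun τ : ℝ => Complex.exp (lam * s) • (Complex.exp (lam * τ) • (S i τ) (v s)))
            (Ioi (0:ℝ)) := (hI3 i (v s)).smul (Complex.exp (lam * s))
        have hF : Integrable ((Ioi (0:ℝ)).indicator
            (fun τ : ℝ => Complex.exp (lam * s) • (Complex.exp (lam * τ) • (S i τ) (v s))))
            volume := (integrable_indicator_iff measurableSet_Ioi).2 hFin
        exact hF.comp_sub_right s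
    set Ci : ℝ := ∫ τ in Ioi (0:ℝ), Real.exp ((lam.re + a) * τ) * τ ^ (-(d i)) with hCi
    have hCi0 : 0 ≤ Ci :=
      setIntegral_nonneg measurableSet_Ioi fun τ hτ => by
        have h' : (0:ℝ) < τ := hτ
        positivity
    have hφeq : ∀ s > (0:ℝ), (∫ t, ‖T.indicator g (s, t)‖) =
        ∫ τ in Ioi (0:ℝ),
          ‖Complex.exp (lam * s) • (Complex.exp (lam * τ) • (S i τ) (v s))‖ := by
      intro s hs
      simp only [hfix s hs]
      rw [integral_sub_right_eq_self (fun x => ‖(Ioi (0:ℝ)).indicator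
        (fun τ : ℝ => Complex.exp (lam * s) • (Complex.exp (lam * τ) • (S i τ) (v s))) x‖) s]
      simp only [norm_indicator_eq_indicator_norm]
      rw [integral_indicator measurableSet_Ioi]
    have hφbd : ∀ s > (0:ℝ), (∫ t, ‖T.indicator g (s, t)‖) ≤
        (M * (‖P i‖ * K) * Ci) * Real.exp ((lam.re + a) * s) := by
      intro s hs
      rw [hφeq s hs]
      have hmaj : ∀ τ ∈ Ioi (0:ℝ),
          ‖Complex.exp (lam * s) • (Complex.exp (lam * τ) • (S i τ) (v s))‖ ≤
            (M * ‖v s‖ * Real.exp (lam.re * s)) *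
              (Real.exp ((lam.re + a) * τ) * τ ^ (-(d i))) := by
        intro τ hτ
        rw [norm_smul, norm_smul, aux_norm_exp, aux_norm_exp]
        calc Real.exp (lam.re * s) * (Real.exp (lam.re * τ) * ‖(S i τ) (v s)‖)
            ≤ Real.exp (lam.re * s) * (Real.exp (lam.re * τ) *
              ((M * Real.exp (a * τ) * τ ^ (-(d i))) * ‖v s‖)) := by
              gcongr
              exact ((S i τ).le_opNorm _).trans
                (mul_le_mul_of_nonneg_right (hSibd i τ hτ) (norm_nonneg _))
          _ = (M * ‖v s‖ * Real.exp (lam.re * s)) *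
              (Real.exp ((lam.re + a) * τ) * τ ^ (-(d i))) := by
              rw [add_mul, Real.exp_add]; ring
      calc (∫ τ in Ioi (0:ℝ),
            ‖Complex.exp (lam * s) • (Complex.exp (lam * τ) • (S i τ) (v s))‖)
          ≤ ∫ τ in Ioi (0:ℝ), (M * ‖v s‖ * Real.exp (lam.re * s)) *
              (Real.exp ((lam.re + a) * τ) * τ ^ (-(d i))) :=
            setIntegral_mono_on (((hI3 i (v s)).smul (Complex.exp (lam * s))).norm)
              ((aux_int hc0 hdi0 hdi1).const_mul _) measurableSet_Ioi hmaj
        _ = (M * ‖v s‖ * Real.exp (lam.re * s)) * Ci := MeasureTheory.integral_const_mul _ _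
        _ ≤ (M * ((‖P i‖ * K) * Real.exp (a * s)) * Real.exp (lam.re * s)) * Ci := by
            refine mul_le_mul_of_nonneg_right ?_ hCi0
            gcongr
            exact hvbd s hs
        _ = (M * (‖P i‖ * K) * Ci) * Real.exp ((lam.re + a) * s) := by
            rw [add_mul, Real.exp_add]; ring
    have hφm : AEStronglyMeasurable (fun s => ∫ t, ‖T.indicator g (s, t)‖) volume :=
      hgm'.norm.integral_prod_right'
    have hφint : Integrable (fun s => ∫ t, ‖T.indicator g (s, t)‖) volume := by
      have hexpint : IntegrableOn
          (fun s : ℝ => (M * (‖P i‖ * K) * Ci) * Real.exp ((lam.re + a) * s))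
          (Ioi (0:ℝ)) := by
        have h := (aux_int hc0 (le_refl (0:ℝ)) zero_lt_one).const_mul (M * (‖P i‖ * K) * Ci)
        simpa [IntegrableOn] using h
      refine Integrable.mono' ((integrable_indicator_iff measurableSet_Ioi).2 hexpint)
        hφm (Filter.Eventually.of_forall fun s => ?_)
      rcases le_or_gt s 0 with hs | hs
      · have h0 : (∫ t, ‖T.indicator g (s, t)‖) = 0 := by
          simp only [hfix0 s hs]
          simp
        rw [h0, indicator_of_notMem (by simpa using hs)]
        simp
      · have h2 : 0 ≤ ∫ t, ‖T.indicator g (s, t)‖ :=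
          integral_nonneg fun t => norm_nonneg _
        rw [Real.norm_of_nonneg h2, indicator_of_mem (mem_Ioi.2 hs)]
        exact hφbd s hs
    have hHint : Integrable (T.indicator g) ((volume : Measure ℝ).prod volume) :=
      (integrable_prod_iff hgm').2 ⟨Filter.Eventually.of_forall hslice, hφint⟩
    have hswap : (∫ s : ℝ, ∫ t : ℝ, T.indicator g (s, t)) =
        ∫ t : ℝ, ∫ s : ℝ, T.indicator g (s, t) :=
      integral_integral_swap (f := fun s t => T.indicator g (s, t)) hHint
    have hinner : ∀ s > (0:ℝ), (∫ t, T.indicator g (s, t)) =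
        Complex.exp (lam * s) • ∫ τ in Ioi (0:ℝ), Complex.exp (lam * τ) • (S i τ) (v s) := by
      intro s hs
      simp only [hfix s hs]
      rw [integral_sub_right_eq_self ((Ioi (0:ℝ)).indicator fun τ =>
        Complex.exp (lam * s) • (Complex.exp (lam * τ) • (S i τ) (v s))) s]
      rw [integral_indicator measurableSet_Ioi, integral_smul]
    have hinner0 : ∀ s : ℝ, s ∉ Ioi (0:ℝ) → (∫ t, T.indicator g (s, t)) = (0 : Xα) := by
      intro s hs
      have hs' : s ≤ 0 := not_lt.1 (by simpa using hs)
      simp only [hfix0 s hs']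
      simp
    have hconv : ∀ t ∈ Ioi (0:ℝ), (∫ s, T.indicator g (s, t)) =
        Complex.exp (lam * t) • ∫ s in Ioo (0:ℝ) t, (S i (t - s)) (v s) := by
      intro t _
      have heq : (fun s => T.indicator g (s, t)) = (Ioo (0:ℝ) t).indicator
          (fun s => Complex.exp (lam * t) • (S i (t - s)) (v s)) := by
        funext s
        by_cases h : 0 < s ∧ s < t
        · rw [indicator_of_mem (show (s, t) ∈ T from h),
            indicator_of_mem (show s ∈ Ioo 0 t from h)]
        · rw [indicator_of_notMem (show (s, t) ∉ T from h),
            indicator_of_notMem (show s ∉ Ioo 0 t from h)]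
      rw [heq, integral_indicator measurableSet_Ioo, integral_smul]
    have hconv0 : ∀ t : ℝ, t ∉ Ioi (0:ℝ) → (∫ s, T.indicator g (s, t)) = (0 : Xα) := by
      intro t ht
      have heq : (fun s => T.indicator g (s, t)) = fun _ => (0 : Xα) := by
        funext s
        refine indicator_of_notMem (fun hmem => ?_) _
        exact ht (mem_Ioi.2 (lt_trans hmem.1 hmem.2))
      rw [heq]
      simp
    have hGbd : ∀ y : Xβ i,
        ‖∫ τ in Ioi (0:ℝ), Complex.exp (lam * τ) • (S i τ) y‖ ≤ (M * Ci) * ‖y‖ := by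
      intro y
      calc ‖∫ τ in Ioi (0:ℝ), Complex.exp (lam * τ) • (S i τ) y‖
          ≤ ∫ τ in Ioi (0:ℝ), ‖Complex.exp (lam * τ) • (S i τ) y‖ :=
            norm_integral_le_integral_norm _
        _ ≤ ∫ τ in Ioi (0:ℝ), (M * ‖y‖) *
              (Real.exp ((lam.re + a) * τ) * τ ^ (-(d i))) := by
            refine setIntegral_mono_on (hI3 i y).norm
              ((aux_int hc0 hdi0 hdi1).const_mul _) measurableSet_Ioi fun τ hτ => ?_
            rw [norm_smul, aux_norm_exp]
            calc Real.exp (lam.re * τ) * ‖(S i τ) y‖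
                ≤ Real.exp (lam.re * τ) * ((M * Real.exp (a * τ) * τ ^ (-(d i))) * ‖y‖) := by
                  gcongr
                  exact ((S i τ).le_opNorm _).trans
                    (mul_le_mul_of_nonneg_right (hSibd i τ hτ) (norm_nonneg _))
              _ = (M * ‖y‖) * (Real.exp ((lam.re + a) * τ) * τ ^ (-(d i))) := by
                  rw [add_mul, Real.exp_add]; ring
        _ = (M * Ci) * ‖y‖ := by rw [MeasureTheory.integral_const_mul]; ring
    set Gmap : Xβ i →L[ℂ] Xα := LinearMap.mkContinuous
      { toFun := fun y => ∫ τ in Ioi (0:ℝ), Complex.exp (lam * τ) • (S i τ) y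
        map_add' := fun y z => by
          simp only [map_add, smul_add]
          exact integral_add (hI3 i y) (hI3 i z)
        map_smul' := fun r y => by
          simp only [_root_.map_smul, RingHom.id_apply]
          rw [← integral_smul]
          congr 1
          funext τ
          rw [smul_comm] }
      (M * Ci) hGbd with hGmapdef
    have hGapp : ∀ y, Gmap y = ∫ τ in Ioi (0:ℝ), Complex.exp (lam * τ) • (S i τ) y :=
      fun y => rfl
    constructor
    · exact IntegrableOn.congr_fun hHint.integral_prod_right.integrableOn hconv measurableSet_Ioi
    · calc (∫ t in Ioi (0:ℝ), Complex.exp (lam * t) • ∫ s in Ioo (0:ℝ) t, (S i (t - s)) (v s))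
          = ∫ t in Ioi (0:ℝ), ∫ s, T.indicator g (s, t) :=
            setIntegral_congr_fun measurableSet_Ioi fun t ht => (hconv t ht).symm
        _ = ∫ t, ∫ s, T.indicator g (s, t) :=
            setIntegral_eq_integral_of_forall_compl_eq_zero fun t ht => hconv0 t ht
        _ = ∫ s, ∫ t, T.indicator g (s, t) := hswap.symm
        _ = ∫ s in Ioi (0:ℝ), ∫ t, T.indicator g (s, t) :=
            (setIntegral_eq_integral_of_forall_compl_eq_zero fun s hs => hinner0 s hs).symm
        _ = ∫ s in Ioi (0:ℝ), (Gmap.comp (P i)) (Complex.exp (lam * s) • u s) := by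
            refine setIntegral_congr_fun measurableSet_Ioi fun s hs => ?_
            rw [hinner s hs, ContinuousLinearMap.comp_apply, _root_.map_smul, _root_.map_smul, hGapp]
        _ = (Gmap.comp (P i)) (∫ s in Ioi (0:ℝ), Complex.exp (lam * s) • u s) :=
            ContinuousLinearMap.integral_comp_comm _ hI1
        _ = ∫ τ in Ioi (0:ℝ), Complex.exp (lam * τ) •
              (S i τ) ((P i) (∫ s in Ioi (0:ℝ), Complex.exp (lam * s) • u s)) := by
            rw [ContinuousLinearMap.comp_apply, hGapp]
  have hsplit : EqOn (fun t : ℝ => Complex.exp (lam * t) • u t)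
      (fun t => Complex.exp (lam * t) • (Sαα t) u₀ +
        ∑ i, Complex.exp (lam * t) • ∫ s in Ioo (0:ℝ) t, (S i (t - s)) ((P i) (u s)))
      (Ioi 0) := by
    intro t ht
    simp only
    rw [hu t ht, smul_add, Finset.smul_sum]
  have hLHS : (∫ t in Ioi (0:ℝ), Complex.exp (lam * t) • u t) =
      (∫ t in Ioi (0:ℝ), Complex.exp (lam * t) • (Sαα t) u₀) +
        ∑ i, ∫ t in Ioi (0:ℝ), Complex.exp (lam * t) •
          ∫ s in Ioo (0:ℝ) t, (S i (t - s)) ((P i) (u s)) := by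
    rw [setIntegral_congr_fun measurableSet_Ioi hsplit,
      integral_add hI2 (integrable_finset_sum _ fun i _ => (key i).1),
      integral_finset_sum _ fun i _ => (key i).1]
  conv_lhs => rw [hLHS]
  congr 1
  exact Finset.sum_congr rfl fun i _ => (key i).2
end

section
/- (Exterior tangent lemma, tangent to the left.) Let c ∈ (a,b) and d ∈ ℝ. Then there exists a unique x* ∈ [a,c] with f(x*) + f′(x*)(c − x*) = d if and only if f(a) + f′(a)(c − a) ≤ d ≤ f(c); equivalently (since a − c < 0), if and only if d ≤ f(c) and (f(a) − d)/(a − c) ≥ f′(a). -/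
/-- Exterior tangent lemma (tangent to the left): for a `C²` function `f` on
`[a,b]` with `f'' > 0`, `c ∈ (a,b)` and `d ∈ ℝ`, there is a unique `x* ∈ [a,c]`
whose tangent line passes through `(c,d)` (i.e. `f(x*) + f'(x*)(c - x*) = d`)
iff `f(a) + f'(a)(c-a) ≤ d ≤ f(c)`; equivalently, iff `d ≤ f(c)` and
`(f(a) - d)/(a - c) ≥ f'(a)`. -/
theorem exterior_tangent_left
    (a b : ℝ) (hab : a < b) (f f' f'' : ℝ → ℝ)
    (hf : ∀ x ∈ Set.Icc a b, HasDerivWithinAt f (f' x) (Set.Icc a b) x)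
    (hf' : ∀ x ∈ Set.Icc a b, HasDerivWithinAt f' (f'' x) (Set.Icc a b) x)
    (hf''cont : ContinuousOn f'' (Set.Icc a b))
    (hf''pos : ∀ x ∈ Set.Icc a b, 0 < f'' x)
    (c : ℝ) (hc : c ∈ Set.Ioo a b) (d : ℝ) :
    ((∃! x : ℝ, x ∈ Set.Icc a c ∧ f x + f' x * (c - x) = d) ↔
      (f a + f' a * (c - a) ≤ d ∧ d ≤ f c)) ∧
    ((∃! x : ℝ, x ∈ Set.Icc a c ∧ f x + f' x * (c - x) = d) ↔
      (d ≤ f c ∧ f' a ≤ (f a - d) / (a - c))) := by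
  obtain ⟨hac, hcb⟩ := hc
  set g : ℝ → ℝ := fun x => f x + f' x * (c - x) with hg
  have hsub : Set.Icc a c ⊆ Set.Icc a b := Set.Icc_subset_Icc le_rfl hcb.le
  have hfc : ContinuousOn f (Set.Icc a b) := fun x hx => (hf x hx).continuousWithinAt
  have hf'c : ContinuousOn f' (Set.Icc a b) := fun x hx => (hf' x hx).continuousWithinAt
  have hgc : ContinuousOn g (Set.Icc a c) := by
    apply ContinuousOn.mono (s := Set.Icc a b) ?_ hsub
    exact hfc.add (hf'c.mul (continuousOn_const.sub continuousOn_id))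
  have hmono : StrictMonoOn g (Set.Icc a c) := by
    apply strictMonoOn_of_deriv_pos (convex_Icc a c) hgc
    intro x hx
    rw [interior_Icc] at hx
    have hxab : Set.Icc a b ∈ nhds x :=
      Icc_mem_nhds hx.1 (hx.2.trans hcb)
    have h1 : HasDerivAt f (f' x) x :=
      (hf x (hsub ⟨hx.1.le, hx.2.le⟩)).hasDerivAt hxab
    have h2 : HasDerivAt f' (f'' x) x :=
      (hf' x (hsub ⟨hx.1.le, hx.2.le⟩)).hasDerivAt hxab
    have h3 : HasDerivAt (fun y => c - y) (-1) x := by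
      simpa using (hasDerivAt_id x).const_sub c
    have hgd : HasDerivAt g (f'' x * (c - x)) x := by
      have : HasDerivAt g (f' x + (f'' x * (c - x) + f' x * -1)) x := h1.add (h2.mul h3)
      convert this using 1
      ring
    rw [hgd.deriv]
    exact mul_pos (hf''pos x (hsub ⟨hx.1.le, hx.2.le⟩)) (by linarith [hx.2])
  have key : (∃! x : ℝ, x ∈ Set.Icc a c ∧ g x = d) ↔ (g a ≤ d ∧ d ≤ g c) := by
    constructor
    · rintro ⟨x, ⟨hx, hgx⟩, -⟩
      exact ⟨hgx ▸ hmono.monotoneOn (Set.left_mem_Icc.2 hac.le) hx hx.1,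
        hgx ▸ hmono.monotoneOn hx (Set.right_mem_Icc.2 hac.le) hx.2⟩
    · rintro ⟨h1, h2⟩
      obtain ⟨x, hx, hgx⟩ := intermediate_value_Icc hac.le hgc ⟨h1, h2⟩
      refine ⟨x, ⟨hx, hgx⟩, ?_⟩
      rintro y ⟨hy, hgy⟩
      exact hmono.injOn hy hx (hgy.trans hgx.symm)
  have hgac : g a = f a + f' a * (c - a) := rfl
  have hgcc : g c = f c := by simp [hg]
  constructor
  · rw [key, hgac, hgcc]
  · rw [key, hgac, hgcc]
    have hneg : a - c < 0 := by linarith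
    rw [le_div_iff_of_neg hneg]
    constructor
    · rintro ⟨h1, h2⟩; exact ⟨h2, by nlinarith⟩
    · rintro ⟨h1, h2⟩; exact ⟨by nlinarith, h1⟩
end

section
/- (Exterior tangent lemma, tangent to the right.) Let c ∈ (a,b) and d ∈ ℝ. Then there exists a unique x* ∈ [c,b] with f(x*) + f′(x*)(c − x*) = d if and only if f(b) + f′(b)(c − b) ≤ d ≤ f(c); equivalently, if and only if d ≤ f(c) and (f(b) − d)/(b − c) ≤ f′(b). -/
/-- Exterior tangent lemma (tangent to the right): for a `C²` function `f` on
`[a,b]` with `f'' > 0`, `c ∈ (a,b)` and `d ∈ ℝ`, there is a unique `x* ∈ [c,b]`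
whose tangent line passes through `(c,d)` (i.e. `f(x*) + f'(x*)(c - x*) = d`)
iff `f(b) + f'(b)(c-b) ≤ d ≤ f(c)`; equivalently, iff `d ≤ f(c)` and
`(f(b) - d)/(b - c) ≤ f'(b)`. -/
theorem exterior_tangent_right
    (a b : ℝ) (hab : a < b) (f f' f'' : ℝ → ℝ)
    (hf : ∀ x ∈ Set.Icc a b, HasDerivWithinAt f (f' x) (Set.Icc a b) x)
    (hf' : ∀ x ∈ Set.Icc a b, HasDerivWithinAt f' (f'' x) (Set.Icc a b) x)
    (hf''cont : ContinuousOn f'' (Set.Icc a b))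
    (hf''pos : ∀ x ∈ Set.Icc a b, 0 < f'' x)
    (c : ℝ) (hc : c ∈ Set.Ioo a b) (d : ℝ) :
    ((∃! x : ℝ, x ∈ Set.Icc c b ∧ f x + f' x * (c - x) = d) ↔
      (f b + f' b * (c - b) ≤ d ∧ d ≤ f c)) ∧
    ((∃! x : ℝ, x ∈ Set.Icc c b ∧ f x + f' x * (c - x) = d) ↔
      (d ≤ f c ∧ (f b - d) / (b - c) ≤ f' b)) := by
  obtain ⟨hac, hcb⟩ := hc
  set g : ℝ → ℝ := fun x => f x + f' x * (c - x) with hg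
  have hsub : Set.Icc c b ⊆ Set.Icc a b := Set.Icc_subset_Icc hac.le le_rfl
  have hgderiv : ∀ x ∈ Set.Icc a b,
      HasDerivWithinAt g (f'' x * (c - x)) (Set.Icc a b) x := by
    intro x hx
    have h1 : HasDerivWithinAt (fun y => c - y) (-1) (Set.Icc a b) x := by
      simpa using (hasDerivWithinAt_id x (Set.Icc a b)).const_sub c
    have h2 := (hf x hx).add ((hf' x hx).mul h1)
    refine h2.congr_deriv ?_
    ring
  have hgcont : ContinuousOn g (Set.Icc a b) := fun x hx =>
    (hgderiv x hx).continuousWithinAt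
  have hanti : StrictAntiOn g (Set.Icc c b) := by
    apply strictAntiOn_of_deriv_neg (convex_Icc c b) (hgcont.mono hsub)
    intro x hx
    rw [interior_Icc] at hx
    have hx' : x ∈ Set.Icc a b := hsub (Set.Ioo_subset_Icc_self hx)
    have hmem : Set.Icc a b ∈ nhds x :=
      Icc_mem_nhds (hac.trans hx.1) hx.2
    have hd : HasDerivAt g (f'' x * (c - x)) x :=
      (hgderiv x hx').hasDerivAt hmem
    rw [hd.deriv]
    exact mul_neg_of_pos_of_neg (hf''pos x hx') (by linarith [hx.1])
  have hantiton : AntitoneOn g (Set.Icc c b) := hanti.antitoneOn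
  have hcmem : c ∈ Set.Icc c b := Set.left_mem_Icc.2 hcb.le
  have hbmem : b ∈ Set.Icc c b := Set.right_mem_Icc.2 hcb.le
  have hgc : g c = f c := by simp [hg]
  have main : (∃! x : ℝ, x ∈ Set.Icc c b ∧ f x + f' x * (c - x) = d) ↔
      (f b + f' b * (c - b) ≤ d ∧ d ≤ f c) := by
    constructor
    · rintro ⟨x, ⟨hx, hgx⟩, -⟩
      have h1 : g b ≤ g x := hantiton hx hbmem hx.2
      have h2 : g x ≤ g c := hantiton hcmem hx hx.1
      rw [hgc] at h2
      exact ⟨hgx ▸ h1, hgx ▸ h2⟩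
    · rintro ⟨h1, h2⟩
      have : d ∈ Set.Icc (g b) (g c) := by
        rw [hgc]; exact ⟨h1, h2⟩
      obtain ⟨x, hx, hgx⟩ :=
        intermediate_value_Icc' hcb.le (hgcont.mono hsub) this
      exact ⟨x, ⟨hx, hgx⟩, fun y ⟨hy, hgy⟩ =>
        hanti.injOn hy hx (hgy.trans hgx.symm)⟩
  have hbc : (0:ℝ) < b - c := by linarith
  refine ⟨main, main.trans ?_⟩
  rw [div_le_iff₀ hbc]
  constructor
  · rintro ⟨h1, h2⟩; exact ⟨h2, by nlinarith⟩
  · rintro ⟨h1, h2⟩; exact ⟨by nlinarith, h1⟩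
end
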